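/- arXiv:1301.1256 — 5 statements merged into one kernel-verified Lean document; each statement's English description precedes it below -/
import Mathlib

section
/- Let 0 < e < 1/2. Then there exists ε₀ > 0 such that for every ε ∈ (0, ε₀) the following holds. Define the graphon g by g(x,y) = 2e − ε if x < 1/2 < y or y < 1/2 < x, and g(x,y) = ε otherwise, and let λ₂ = [I₀'(2e−ε) − I₀'(ε)]/(6(e−ε)²). Then for every symmetric, square-integrable measurable function δg : [0,1]² → ℝ, 3λ₂·∫₀¹∫₀¹∫₀¹ g(x,y) δg(x,z) δg(y,z) dx dy dz + (1/2)·∫₀¹∫₀¹ I₀''(g(x,y)) δg(x,y)² dx dy ≥ (1/2)·∫₀¹∫₀¹ δg(x,y)² dx dy. -/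
open MeasureTheory Real Set Filter

noncomputable section

/-- `I₀(u) = (1/2)[u ln u + (1-u) ln(1-u)]`, with the convention `log 0 = 0`
    giving `I₀(0) = I₀(1) = 0`. -/
def I0 (u : ℝ) : ℝ := (u * Real.log u + (1 - u) * Real.log (1 - u)) / 2

/-- `I₀'(u) = (1/2)[ln u − ln(1−u)]`. -/
def I0d (u : ℝ) : ℝ := (Real.log u - Real.log (1 - u)) / 2

/-- `I₀''(u) = (1/2)[1/u + 1/(1−u)]`. -/
def I0dd (u : ℝ) : ℝ := (1 / u + 1 / (1 - u)) / 2

/-- A graphon: a measurable, symmetric function `[0,1]² → [0,1]`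
    (here defined on all of `ℝ²`, with values used only on `[0,1]²`). -/
def IsGraphon (g : ℝ → ℝ → ℝ) : Prop :=
  Measurable (Function.uncurry g) ∧ (∀ x y, g x y = g y x) ∧ ∀ x y, g x y ∈ Icc (0 : ℝ) 1

/-- The edge density `e(g) = ∫₀¹∫₀¹ g(x,y) dx dy`. -/
def edgeDensity (g : ℝ → ℝ → ℝ) : ℝ :=
  ∫ x in Icc (0 : ℝ) 1, ∫ y in Icc (0 : ℝ) 1, g x y

/-- The triangle density `t(g) = ∫₀¹∫₀¹∫₀¹ g(x,y) g(y,z) g(z,x) dx dy dz`. -/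
def triangleDensity (g : ℝ → ℝ → ℝ) : ℝ :=
  ∫ x in Icc (0 : ℝ) 1, ∫ y in Icc (0 : ℝ) 1, ∫ z in Icc (0 : ℝ) 1, g x y * g y z * g z x

/-- The rate function `I(g) = ∫₀¹∫₀¹ I₀(g(x,y)) dx dy`. -/
def rate (g : ℝ → ℝ → ℝ) : ℝ :=
  ∫ x in Icc (0 : ℝ) 1, ∫ y in Icc (0 : ℝ) 1, I0 (g x y)

/-- Lebesgue measure restricted to `[0,1]`. -/
def unitMeasure : Measure ℝ := volume.restrict (Icc (0 : ℝ) 1)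

/-- Two graphons are equivalent if they agree a.e. after composing with
    measure-preserving maps of `[0,1]`. -/
def GraphonEquiv (f g : ℝ → ℝ → ℝ) : Prop :=
  ∃ σ σ' : ℝ → ℝ, MeasurePreserving σ unitMeasure unitMeasure ∧
    MeasurePreserving σ' unitMeasure unitMeasure ∧
    ∀ᵐ p ∂(unitMeasure.prod unitMeasure), f (σ p.1) (σ p.2) = g (σ' p.1) (σ' p.2)

end

/-- The perturbed bipartite graphon: `2e − ε` on `{x < 1/2 < y} ∪ {y < 1/2 < x}`
    and `ε` elsewhere. -/
noncomputable def gEps (e ε : ℝ) : ℝ → ℝ → ℝ := fun x y =>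
  if (x < 1 / 2 ∧ 1 / 2 < y) ∨ (y < 1 / 2 ∧ 1 / 2 < x) then 2 * e - ε else ε

noncomputable section AuxSVB

open Function Topology

/-- left-half indicator -/
def chiL (x : ℝ) : ℝ := if x < 1 / 2 then 1 else 0

/-- right-half indicator -/
def chiR (x : ℝ) : ℝ := if 1 / 2 < x then 1 else 0

lemma chiL_mem (x : ℝ) : 0 ≤ chiL x ∧ chiL x ≤ 1 := by unfold chiL; split_ifs <;> norm_num

lemma chiR_mem (x : ℝ) : 0 ≤ chiR x ∧ chiR x ≤ 1 := by unfold chiR; split_ifs <;> norm_num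

lemma chiL_norm (x : ℝ) : ‖chiL x‖ ≤ 1 := by
  rw [Real.norm_eq_abs, abs_of_nonneg (chiL_mem x).1]; exact (chiL_mem x).2

lemma chiR_norm (x : ℝ) : ‖chiR x‖ ≤ 1 := by
  rw [Real.norm_eq_abs, abs_of_nonneg (chiR_mem x).1]; exact (chiR_mem x).2

lemma chiL_meas : Measurable chiL :=
  Measurable.ite (measurableSet_lt measurable_id measurable_const)
    measurable_const measurable_const

lemma chiR_meas : Measurable chiR :=
  Measurable.ite (measurableSet_lt measurable_const measurable_id)
    measurable_const measurable_const

lemma chi_sum {x : ℝ} (h : x ≠ 1 / 2) : chiL x + chiR x = 1 := by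
  rcases lt_or_gt_of_ne h with h' | h'
  · simp only [chiL, chiR, if_pos h', if_neg (asymm h')]; norm_num
  · simp only [chiL, chiR, if_pos h', if_neg (asymm h')]; norm_num

lemma chiL_sq (x : ℝ) : chiL x * chiL x = chiL x := by
  unfold chiL; split_ifs <;> norm_num

lemma chiR_sq (x : ℝ) : chiR x * chiR x = chiR x := by
  unfold chiR; split_ifs <;> norm_num

lemma norm_mul_le_half_sq (u v : ℝ) : ‖u‖ * ‖v‖ ≤ (u ^ 2 + v ^ 2) / 2 := by
  rw [Real.norm_eq_abs, Real.norm_eq_abs]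
  nlinarith [sq_nonneg (|u| - |v|), sq_abs u, sq_abs v]

lemma abs_le_one_add_sq (t : ℝ) : ‖t‖ ≤ 1 + t ^ 2 := by
  rw [Real.norm_eq_abs]
  nlinarith [sq_nonneg (|t| - 1), sq_abs t, abs_nonneg t]

lemma my_cs {μ : Measure ℝ} {f g : ℝ → ℝ}
    (hfg : Integrable (fun x => f x * g x) μ)
    (hf2 : Integrable (fun x => f x ^ 2) μ)
    (hg2 : Integrable (fun x => g x ^ 2) μ) :
    (∫ x, f x * g x ∂μ) ^ 2 ≤ (∫ x, f x ^ 2 ∂μ) * (∫ x, g x ^ 2 ∂μ) := by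
  have key : ∀ t : ℝ, 0 ≤ (∫ x, f x ^ 2 ∂μ) * (t * t)
      + (2 * ∫ x, f x * g x ∂μ) * t + (∫ x, g x ^ 2 ∂μ) := by
    intro t
    have h2 : 0 ≤ ∫ x, (t * f x + g x) ^ 2 ∂μ := integral_nonneg fun x => sq_nonneg _
    have hA : Integrable (fun x => t ^ 2 * f x ^ 2) μ := hf2.const_mul _
    have hB : Integrable (fun x => 2 * t * (f x * g x)) μ := hfg.const_mul _
    have e1 : ∫ x, (t ^ 2 * f x ^ 2 + 2 * t * (f x * g x)) + g x ^ 2 ∂μ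
        = (∫ x, t ^ 2 * f x ^ 2 + 2 * t * (f x * g x) ∂μ) + ∫ x, g x ^ 2 ∂μ :=
      integral_add (hA.add hB) hg2
    have e2 : ∫ x, t ^ 2 * f x ^ 2 + 2 * t * (f x * g x) ∂μ
        = (∫ x, t ^ 2 * f x ^ 2 ∂μ) + ∫ x, 2 * t * (f x * g x) ∂μ := integral_add hA hB
    have hid2 : (fun x => (t * f x + g x) ^ 2)
        = fun x => (t ^ 2 * f x ^ 2 + 2 * t * (f x * g x)) + g x ^ 2 := by ext x; ring
    rw [hid2, e1, e2, integral_const_mul, integral_const_mul] at h2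
    nlinarith [h2]
  have hd := discrim_le_zero key
  rw [discrim] at hd
  nlinarith [hd]

lemma I0dd_ge_two {u : ℝ} (hu : 0 < u) (hu1 : u < 1) : 2 ≤ I0dd u := by
  have h1u : 0 < 1 - u := by linarith
  have h4 : 4 ≤ 1 / u + 1 / (1 - u) := by
    rw [div_add_div _ _ (ne_of_gt hu) (ne_of_gt h1u), le_div_iff₀ (mul_pos hu h1u)]
    nlinarith [sq_nonneg (2 * u - 1)]
  unfold I0dd; linarith

set_option maxHeartbeats 3200000 in
lemma key_bound (e ε : ℝ) (he0 : 0 < e) (he : e < 1 / 2) (hε0 : 0 < ε) (hεe : ε < e)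
    (hnum : (I0d (2 * e - ε) - I0d ε) ^ 2 / (e - ε) ^ 2 ≤ I0dd ε - 1)
    (δg : ℝ → ℝ → ℝ) (mδ : Measurable (uncurry δg)) (sδ : ∀ x y, δg x y = δg y x)
    (Hint : IntegrableOn (fun q : ℝ × ℝ => (δg q.1 q.2) ^ 2) (Icc (0 : ℝ) 1 ×ˢ Icc (0 : ℝ) 1)) :
    3 * ((I0d (2 * e - ε) - I0d ε) / (6 * (e - ε) ^ 2)) *
        (∫ x in Icc (0 : ℝ) 1, ∫ y in Icc (0 : ℝ) 1, ∫ z in Icc (0 : ℝ) 1,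
          gEps e ε x y * δg x z * δg y z) +
      (1 / 2) * (∫ x in Icc (0 : ℝ) 1, ∫ y in Icc (0 : ℝ) 1,
          I0dd (gEps e ε x y) * (δg x y) ^ 2) ≥
    (1 / 2) * (∫ x in Icc (0 : ℝ) 1, ∫ y in Icc (0 : ℝ) 1, (δg x y) ^ 2) := by
  -- basic numeric facts
  have hε1 : ε < 1 := by linarith
  have hee : 0 < e - ε := by linarith
  have h2e0 : 0 < 2 * e - ε := by linarith
  have h2e1 : 2 * e - ε < 1 := by linarith
  have hG : 0 < I0d (2 * e - ε) - I0d ε := by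
    unfold I0d
    have l1 : Real.log ε < Real.log (2 * e - ε) := Real.log_lt_log hε0 (by linarith)
    have l2 : Real.log (1 - (2 * e - ε)) < Real.log (1 - ε) :=
      Real.log_lt_log (by linarith) (by linarith)
    linarith
  set G : ℝ := I0d (2 * e - ε) - I0d ε with hGdef
  set cε : ℝ := I0dd ε with hcεdef
  set c₂ : ℝ := I0dd (2 * e - ε) with hc₂def
  have hcε : 2 ≤ cε := I0dd_ge_two hε0 hε1
  have hc₂ : 2 ≤ c₂ := I0dd_ge_two h2e0 h2e1
  set c : ℝ := 2 * e - 2 * ε with hcdef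
  have hc : 0 < c := by rw [hcdef]; linarith
  set Λ : ℝ := 3 * (G / (6 * (e - ε) ^ 2)) with hΛdef
  have hΛpos : 0 < Λ := by
    rw [hΛdef]
    positivity
  have hΛc : Λ * c = G / (e - ε) := by
    rw [hΛdef, hcdef]
    field_simp
    ring
  have hγsq : (Λ * c) ^ 2 ≤ cε - 1 := by
    rw [hΛc, div_pow]; exact hnum
  -- measure setup
  set μ : Measure ℝ := volume.restrict (Icc (0 : ℝ) 1) with hμdef
  haveI : IsProbabilityMeasure μ := by
    constructor
    rw [hμdef, Measure.restrict_apply_univ, Real.volume_Icc]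
    norm_num
  set ρ : Measure (ℝ × ℝ) := μ.prod μ with hρdef
  have m1 : Measurable (fun p : ℝ × ℝ => δg p.1 p.2) := mδ
  have Hsq : Integrable (fun p : ℝ × ℝ => δg p.1 p.2 ^ 2) ρ := by
    have h := Hint
    rw [IntegrableOn, Measure.volume_eq_prod, ← Measure.prod_restrict] at h
    exact h
  have Habs : Integrable (fun p : ℝ × ℝ => δg p.1 p.2) ρ :=
    Integrable.mono' ((integrable_const 1).add Hsq) m1.aestronglyMeasurable
      (ae_of_all _ fun p => abs_le_one_add_sq _)
  -- bounded weight times δg² is integrable on ρ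
  have wInt : ∀ w : ℝ × ℝ → ℝ, Measurable w → (∀ p, ‖w p‖ ≤ 1) →
      Integrable (fun p : ℝ × ℝ => w p * δg p.1 p.2 ^ 2) ρ := by
    intro w hw hb
    refine Hsq.mono' ((hw.mul (m1.pow_const 2)).aestronglyMeasurable) (ae_of_all _ fun p => ?_)
    rw [norm_mul]
    calc ‖w p‖ * ‖δg p.1 p.2 ^ 2‖ ≤ 1 * ‖δg p.1 p.2 ^ 2‖ :=
          mul_le_mul_of_nonneg_right (hb p) (norm_nonneg _)
      _ = δg p.1 p.2 ^ 2 := by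
          rw [one_mul, Real.norm_eq_abs, abs_of_nonneg (sq_nonneg _)]
  -- marginal H
  set H : ℝ → ℝ := fun z => ∫ t, δg t z ^ 2 ∂μ with hHdef
  have SMδ2 : StronglyMeasurable (fun p : ℝ × ℝ => δg p.1 p.2 ^ 2) :=
    (m1.pow_const 2).stronglyMeasurable
  have mH : StronglyMeasurable H := SMδ2.integral_prod_left'
  have hH_int : Integrable H μ := Hsq.integral_prod_right
  have Hsym : ∀ z, H z = ∫ t, δg z t ^ 2 ∂μ := fun z =>
    integral_congr_ae (Eventually.of_forall fun t => by
      show δg t z ^ 2 = δg z t ^ 2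
      rw [sδ t z])
  have hH_nonneg : ∀ z, 0 ≤ H z := fun z => integral_nonneg fun t => sq_nonneg _
  -- measure preserving projections
  have mp_fst : MeasurePreserving Prod.fst ρ μ := by
    constructor
    · exact measurable_fst
    · rw [hρdef, Measure.map_fst_prod, measure_univ, one_smul]
  have mp_snd : MeasurePreserving Prod.snd ρ μ := by
    constructor
    · exact measurable_snd
    · rw [hρdef, Measure.map_snd_prod, measure_univ, one_smul]
  have mp13 : MeasurePreserving (Prod.map (Prod.fst : ℝ × ℝ → ℝ) (id : ℝ → ℝ)) (ρ.prod μ) ρ := by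
    rw [hρdef]
    exact (mp_fst.prod (MeasurePreserving.id μ))
  have mp23 : MeasurePreserving (Prod.map (Prod.snd : ℝ × ℝ → ℝ) (id : ℝ → ℝ)) (ρ.prod μ) ρ := by
    rw [hρdef]
    exact (mp_snd.prod (MeasurePreserving.id μ))
  have hint13 : Integrable (fun q : (ℝ × ℝ) × ℝ => δg q.1.1 q.2 ^ 2) (ρ.prod μ) := by
    have := (mp13.integrable_comp SMδ2.aestronglyMeasurable).2 Hsq
    exact this
  have hint23 : Integrable (fun q : (ℝ × ℝ) × ℝ => δg q.1.2 q.2 ^ 2) (ρ.prod μ) := by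
    have := (mp23.integrable_comp SMδ2.aestronglyMeasurable).2 Hsq
    exact this
  -- a.e. good sections
  have hAE2 : ∀ᵐ z ∂μ, Integrable (fun t => δg t z ^ 2) μ := Hsq.prod_left_ae
  have hAE1 : ∀ᵐ z ∂μ, Integrable (fun t => δg t z) μ := Habs.prod_left_ae
  have good : ∀ᵐ x ∂μ, Integrable (fun z => δg x z) μ ∧ Integrable (fun z => δg x z ^ 2) μ := by
    filter_upwards [hAE1, hAE2] with x h1 h2
    constructor
    · have he : (fun z => δg x z) = fun t => δg t x := funext fun z => sδ x z
      rw [he]; exact h1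
    · have he : (fun z => δg x z ^ 2) = fun t => δg t x ^ 2 := funext fun z => by rw [sδ x z]
      rw [he]; exact h2
  -- the kernel k
  set k : ℝ × ℝ → ℝ := fun p => ∫ z, δg p.1 z * δg p.2 z ∂μ with hkdef
  have mker : Measurable (fun q : (ℝ × ℝ) × ℝ => δg q.1.1 q.2 * δg q.1.2 q.2) := by
    exact (mδ.comp ((measurable_fst.comp measurable_fst).prodMk measurable_snd)).mul
      (mδ.comp ((measurable_snd.comp measurable_fst).prodMk measurable_snd))
  have SMk : StronglyMeasurable k := mker.stronglyMeasurable.integral_prod_right'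
  have good_fst : ∀ᵐ p ∂ρ, Integrable (fun z => δg p.1 z) μ ∧ Integrable (fun z => δg p.1 z ^ 2) μ :=
    Measure.quasiMeasurePreserving_fst.ae good
  have good_snd : ∀ᵐ p ∂ρ, Integrable (fun z => δg p.2 z) μ ∧ Integrable (fun z => δg p.2 z ^ 2) μ :=
    Measure.quasiMeasurePreserving_snd.ae good
  have hk_ae_bound : ∀ᵐ p ∂ρ, ‖k p‖ ≤ (H p.1 + H p.2) / 2 := by
    filter_upwards [good_fst, good_snd] with p h1 h2
    have step1 : ‖k p‖ ≤ ∫ z, ‖δg p.1 z * δg p.2 z‖ ∂μ := norm_integral_le_integral_norm _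
    have step2 : ∫ z, ‖δg p.1 z * δg p.2 z‖ ∂μ ≤ ∫ z, (δg p.1 z ^ 2 + δg p.2 z ^ 2) / 2 ∂μ := by
      refine integral_mono_of_nonneg (ae_of_all _ fun z => norm_nonneg _)
        ((h1.2.add h2.2).div_const 2) (ae_of_all _ fun z => ?_)
      show ‖δg p.1 z * δg p.2 z‖ ≤ (δg p.1 z ^ 2 + δg p.2 z ^ 2) / 2
      rw [norm_mul]
      exact norm_mul_le_half_sq _ _
    have step3 : ∫ z, (δg p.1 z ^ 2 + δg p.2 z ^ 2) / 2 ∂μ = (H p.1 + H p.2) / 2 := by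
      rw [integral_div, integral_add h1.2 h2.2, Hsym p.1, Hsym p.2]
    calc ‖k p‖ ≤ _ := step1
      _ ≤ _ := step2
      _ = _ := step3
  have hHsum_int : Integrable (fun p : ℝ × ℝ => (H p.1 + H p.2) / 2) ρ := by
    have i1 : Integrable (fun p : ℝ × ℝ => H p.1) ρ :=
      (mp_fst.integrable_comp mH.aestronglyMeasurable).2 hH_int
    have i2 : Integrable (fun p : ℝ × ℝ => H p.2) ρ :=
      (mp_snd.integrable_comp mH.aestronglyMeasurable).2 hH_int
    exact (i1.add i2).div_const 2
  have hk_int : Integrable k ρ := Integrable.mono' hHsum_int SMk.aestronglyMeasurable hk_ae_bound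
  -- generic swap lemma
  have swap_key : ∀ wA wB : ℝ → ℝ, Measurable wA → Measurable wB →
      (∀ t, ‖wA t‖ ≤ 1) → (∀ t, ‖wB t‖ ≤ 1) →
      ∫ p, wA p.1 * wB p.2 * k p ∂ρ
        = ∫ z, (∫ t, wA t * δg t z ∂μ) * (∫ t, wB t * δg t z ∂μ) ∂μ := by
    intro wA wB mA mB bA bB
    have hpt : ∀ p : ℝ × ℝ, wA p.1 * wB p.2 * k p
        = ∫ z, (wA p.1 * δg p.1 z) * (wB p.2 * δg p.2 z) ∂μ := by
      intro p
      rw [hkdef]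
      calc wA p.1 * wB p.2 * (∫ z, δg p.1 z * δg p.2 z ∂μ)
          = ∫ z, (wA p.1 * wB p.2) * (δg p.1 z * δg p.2 z) ∂μ := (integral_const_mul _ _).symm
        _ = ∫ z, (wA p.1 * δg p.1 z) * (wB p.2 * δg p.2 z) ∂μ :=
            integral_congr_ae (ae_of_all _ fun z => by ring)
    have hFint : Integrable
        (uncurry fun (p : ℝ × ℝ) (z : ℝ) => (wA p.1 * δg p.1 z) * (wB p.2 * δg p.2 z))
        (ρ.prod μ) := by
      have hmeas : Measurable (fun q : (ℝ × ℝ) × ℝ =>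
          (wA q.1.1 * δg q.1.1 q.2) * (wB q.1.2 * δg q.1.2 q.2)) := by
        exact ((mA.comp (measurable_fst.comp measurable_fst)).mul
            (mδ.comp ((measurable_fst.comp measurable_fst).prodMk measurable_snd))).mul
          ((mB.comp (measurable_snd.comp measurable_fst)).mul
            (mδ.comp ((measurable_snd.comp measurable_fst).prodMk measurable_snd)))
      refine Integrable.mono' ((hint13.add hint23).div_const 2)
        hmeas.aestronglyMeasurable (ae_of_all _ fun q => ?_)
      show ‖(wA q.1.1 * δg q.1.1 q.2) * (wB q.1.2 * δg q.1.2 q.2)‖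
          ≤ (fun q : (ℝ × ℝ) × ℝ => ((fun q : (ℝ × ℝ) × ℝ => δg q.1.1 q.2 ^ 2) q
            + (fun q : (ℝ × ℝ) × ℝ => δg q.1.2 q.2 ^ 2) q) / 2) q
      calc ‖(wA q.1.1 * δg q.1.1 q.2) * (wB q.1.2 * δg q.1.2 q.2)‖
          = ‖wA q.1.1‖ * ‖δg q.1.1 q.2‖ * (‖wB q.1.2‖ * ‖δg q.1.2 q.2‖) := by
            rw [norm_mul, norm_mul, norm_mul]
        _ ≤ 1 * ‖δg q.1.1 q.2‖ * (1 * ‖δg q.1.2 q.2‖) := by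
            apply mul_le_mul
            · exact mul_le_mul_of_nonneg_right (bA _) (norm_nonneg _)
            · exact mul_le_mul_of_nonneg_right (bB _) (norm_nonneg _)
            · positivity
            · positivity
        _ = ‖δg q.1.1 q.2‖ * ‖δg q.1.2 q.2‖ := by ring
        _ ≤ (δg q.1.1 q.2 ^ 2 + δg q.1.2 q.2 ^ 2) / 2 := norm_mul_le_half_sq _ _
    calc ∫ p, wA p.1 * wB p.2 * k p ∂ρ
        = ∫ p, ∫ z, (wA p.1 * δg p.1 z) * (wB p.2 * δg p.2 z) ∂μ ∂ρ :=
          integral_congr_ae (ae_of_all _ fun p => hpt p)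
      _ = ∫ z, ∫ p, (wA p.1 * δg p.1 z) * (wB p.2 * δg p.2 z) ∂ρ ∂μ :=
          integral_integral_swap hFint
      _ = ∫ z, (∫ t, wA t * δg t z ∂μ) * (∫ t, wB t * δg t z ∂μ) ∂μ := by
          refine integral_congr_ae (ae_of_all _ fun z => ?_)
          rw [hρdef]
          exact integral_prod_mul (fun t => wA t * δg t z) (fun t => wB t * δg t z)
  -- region quantities
  set D1 : ℝ := ∫ p, chiL p.1 * chiL p.2 * δg p.1 p.2 ^ 2 ∂ρ with hD1def
  set D2 : ℝ := ∫ p, chiR p.1 * chiR p.2 * δg p.1 p.2 ^ 2 ∂ρ with hD2def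
  set P1 : ℝ := ∫ p, chiL p.1 * chiR p.2 * δg p.1 p.2 ^ 2 ∂ρ with hP1def
  set P2 : ℝ := ∫ p, chiR p.1 * chiL p.2 * δg p.1 p.2 ^ 2 ∂ρ with hP2def
  set M : ℝ := ∫ p, δg p.1 p.2 ^ 2 ∂ρ with hMdef
  have wmeasLL : Measurable fun p : ℝ × ℝ => chiL p.1 * chiL p.2 :=
    (chiL_meas.comp measurable_fst).mul (chiL_meas.comp measurable_snd)
  have wmeasRR : Measurable fun p : ℝ × ℝ => chiR p.1 * chiR p.2 :=
    (chiR_meas.comp measurable_fst).mul (chiR_meas.comp measurable_snd)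
  have wmeasLR : Measurable fun p : ℝ × ℝ => chiL p.1 * chiR p.2 :=
    (chiL_meas.comp measurable_fst).mul (chiR_meas.comp measurable_snd)
  have wmeasRL : Measurable fun p : ℝ × ℝ => chiR p.1 * chiL p.2 :=
    (chiR_meas.comp measurable_fst).mul (chiL_meas.comp measurable_snd)
  have wb : ∀ (u v : ℝ → ℝ), (∀ t, ‖u t‖ ≤ 1) → (∀ t, ‖v t‖ ≤ 1) →
      ∀ p : ℝ × ℝ, ‖u p.1 * v p.2‖ ≤ 1 := by
    intro u v hu hv p
    rw [norm_mul]
    calc ‖u p.1‖ * ‖v p.2‖ ≤ 1 * 1 :=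
        mul_le_mul (hu _) (hv _) (norm_nonneg _) zero_le_one
      _ = 1 := by norm_num
  have intLL := wInt _ wmeasLL (wb _ _ chiL_norm chiL_norm)
  have intRR := wInt _ wmeasRR (wb _ _ chiR_norm chiR_norm)
  have intLR := wInt _ wmeasLR (wb _ _ chiL_norm chiR_norm)
  have intRL := wInt _ wmeasRL (wb _ _ chiR_norm chiL_norm)
  have hD1_nonneg : 0 ≤ D1 := integral_nonneg fun p =>
    mul_nonneg (mul_nonneg (chiL_mem _).1 (chiL_mem _).1) (sq_nonneg _)
  have hD2_nonneg : 0 ≤ D2 := integral_nonneg fun p =>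
    mul_nonneg (mul_nonneg (chiR_mem _).1 (chiR_mem _).1) (sq_nonneg _)
  have hP1_nonneg : 0 ≤ P1 := integral_nonneg fun p =>
    mul_nonneg (mul_nonneg (chiL_mem _).1 (chiR_mem _).1) (sq_nonneg _)
  have hP2_nonneg : 0 ≤ P2 := integral_nonneg fun p =>
    mul_nonneg (mul_nonneg (chiR_mem _).1 (chiL_mem _).1) (sq_nonneg _)
  -- marginal identity
  have marg : ∀ wA wB : ℝ → ℝ, Measurable wA → Measurable wB →
      (∀ t, ‖wA t‖ ≤ 1) → (∀ t, ‖wB t‖ ≤ 1) →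
      ∫ z, wA z * (∫ t, wB t * δg t z ^ 2 ∂μ) ∂μ
        = ∫ p, wA p.1 * wB p.2 * δg p.1 p.2 ^ 2 ∂ρ := by
    intro wA wB mA mB bA bB
    have hfun : (fun q : ℝ × ℝ => wA q.1 * (wB q.2 * δg q.2 q.1 ^ 2))
        = fun q : ℝ × ℝ => (wA q.1 * wB q.2) * δg q.1 q.2 ^ 2 := by
      funext q
      rw [sδ q.2 q.1]
      ring
    have hWint : Integrable (uncurry fun z t => wA z * (wB t * δg t z ^ 2)) ρ := by
      have : (uncurry fun z t => wA z * (wB t * δg t z ^ 2))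
          = fun q : ℝ × ℝ => (wA q.1 * wB q.2) * δg q.1 q.2 ^ 2 := hfun
      rw [this]
      exact wInt _ ((mA.comp measurable_fst).mul (mB.comp measurable_snd)) (wb _ _ bA bB)
    calc ∫ z, wA z * (∫ t, wB t * δg t z ^ 2 ∂μ) ∂μ
        = ∫ z, ∫ t, wA z * (wB t * δg t z ^ 2) ∂μ ∂μ :=
          integral_congr_ae (ae_of_all _ fun z => (integral_const_mul _ _).symm)
      _ = ∫ q : ℝ × ℝ, wA q.1 * (wB q.2 * δg q.2 q.1 ^ 2) ∂ρ := integral_integral hWint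
      _ = ∫ p, wA p.1 * wB p.2 * δg p.1 p.2 ^ 2 ∂ρ := by rw [hfun]
  -- the marginal functions
  set HL : ℝ → ℝ := fun z => ∫ t, chiL t * δg t z ^ 2 ∂μ with hHLdef
  set HR : ℝ → ℝ := fun z => ∫ t, chiR t * δg t z ^ 2 ∂μ with hHRdef
  set aF : ℝ → ℝ := fun z => ∫ t, chiL t * δg t z ∂μ with haFdef
  set bF : ℝ → ℝ := fun z => ∫ t, chiR t * δg t z ∂μ with hbFdef
  set SF : ℝ → ℝ := fun z => ∫ t, δg t z ∂μ with hSFdef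
  have mHL : StronglyMeasurable HL :=
    (((chiL_meas.comp measurable_fst).mul (m1.pow_const 2)).stronglyMeasurable).integral_prod_left'
  have mHR : StronglyMeasurable HR :=
    (((chiR_meas.comp measurable_fst).mul (m1.pow_const 2)).stronglyMeasurable).integral_prod_left'
  have maF : StronglyMeasurable aF :=
    (((chiL_meas.comp measurable_fst).mul m1).stronglyMeasurable).integral_prod_left'
  have mbF : StronglyMeasurable bF :=
    (((chiR_meas.comp measurable_fst).mul m1).stronglyMeasurable).integral_prod_left'
  have hHL_int : Integrable HL μ := by
    have := (wInt (fun p => chiL p.1) (chiL_meas.comp measurable_fst)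
      (fun p => chiL_norm p.1)).integral_prod_right
    exact this
  have hHR_int : Integrable HR μ := by
    have := (wInt (fun p => chiR p.1) (chiR_meas.comp measurable_fst)
      (fun p => chiR_norm p.1)).integral_prod_right
    exact this
  have hHL_nonneg : ∀ z, 0 ≤ HL z := fun z =>
    integral_nonneg fun t => mul_nonneg (chiL_mem t).1 (sq_nonneg _)
  have hHR_nonneg : ∀ z, 0 ≤ HR z := fun z =>
    integral_nonneg fun t => mul_nonneg (chiR_mem t).1 (sq_nonneg _)
  -- ∫ chiL = 1/2 and ∫ chiR = 1/2
  have IL : ∫ t, chiL t ∂μ = 1 / 2 := by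
    have hind : chiL = (Iio (1/2 : ℝ)).indicator (fun _ => (1:ℝ)) := by
      funext x
      simp [chiL, Set.indicator_apply, Set.mem_Iio]
    rw [hind, integral_indicator_const (1:ℝ) measurableSet_Iio, hμdef, measureReal_def,
      Measure.restrict_apply measurableSet_Iio]
    have hset : Iio (1/2 : ℝ) ∩ Icc 0 1 = Ico (0:ℝ) (1/2) := by
      ext x
      simp only [mem_inter_iff, mem_Iio, mem_Icc, mem_Ico]
      constructor
      · rintro ⟨h1, h2, h3⟩; exact ⟨h2, h1⟩
      · rintro ⟨h1, h2⟩; exact ⟨h2, h1, by linarith⟩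
    rw [hset, Real.volume_Ico, smul_eq_mul, mul_one, ENNReal.toReal_ofReal (by norm_num)]
    norm_num
  have IR : ∫ t, chiR t ∂μ = 1 / 2 := by
    have hind : chiR = (Ioi (1/2 : ℝ)).indicator (fun _ => (1:ℝ)) := by
      funext x
      simp [chiR, Set.indicator_apply, Set.mem_Ioi]
    rw [hind, integral_indicator_const (1:ℝ) measurableSet_Ioi, hμdef, measureReal_def,
      Measure.restrict_apply measurableSet_Ioi]
    have hset : Ioi (1/2 : ℝ) ∩ Icc 0 1 = Ioc (1/2 : ℝ) 1 := by
      ext x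
      simp only [mem_inter_iff, mem_Ioi, mem_Icc, mem_Ioc]
      constructor
      · rintro ⟨h1, h2, h3⟩; exact ⟨h1, h3⟩
      · rintro ⟨h1, h2⟩; exact ⟨h1, by linarith, h2⟩
    rw [hset, Real.volume_Ioc, smul_eq_mul, mul_one, ENNReal.toReal_ofReal (by norm_num)]
    norm_num
  -- Cauchy-Schwarz for the half-line averages
  have hCS : ∀ᵐ z ∂μ, aF z ^ 2 ≤ HL z / 2 ∧ bF z ^ 2 ≤ HR z / 2 := by
    filter_upwards [hAE1, hAE2] with z h1 h2
    have mz : Measurable fun t => δg t z := mδ.comp (measurable_id.prodMk measurable_const)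
    have hhalf : ∀ (χ : ℝ → ℝ), Measurable χ → (∀ t, 0 ≤ χ t ∧ χ t ≤ 1) →
        (∀ t, χ t * χ t = χ t) →
        (∫ t, χ t ∂μ) = 1 / 2 →
        (∫ t, χ t * δg t z ∂μ) ^ 2 ≤ (∫ t, χ t * δg t z ^ 2 ∂μ) / 2 := by
      intro χ mχ hmem idem hχint
      have bχ : ∀ t, ‖χ t‖ ≤ 1 := fun t => by
        rw [Real.norm_eq_abs, abs_of_nonneg (hmem t).1]; exact (hmem t).2
      have hχsq_le : ∀ t, χ t ^ 2 ≤ 1 := fun t => by nlinarith [(hmem t).1, (hmem t).2]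
      have ifg : Integrable (fun t => χ t * δg t z) μ :=
        Integrable.mono' h1.norm ((mχ.mul mz).aestronglyMeasurable)
          (ae_of_all _ fun t => by
            rw [norm_mul]
            calc ‖χ t‖ * ‖δg t z‖ ≤ 1 * ‖δg t z‖ :=
                mul_le_mul_of_nonneg_right (bχ t) (norm_nonneg _)
              _ = ‖δg t z‖ := one_mul _)
      have hfg' : Integrable (fun t => χ t * (χ t * δg t z)) μ := by
        have : (fun t => χ t * (χ t * δg t z)) = fun t => χ t * δg t z :=
          funext fun t => by rw [← mul_assoc, idem t]
        rw [this]; exact ifg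
      have if2 : Integrable (fun t => χ t ^ 2) μ :=
        Integrable.mono' (integrable_const (1:ℝ)) ((mχ.pow_const 2).aestronglyMeasurable)
          (ae_of_all _ fun t => by
            show ‖χ t ^ 2‖ ≤ 1
            rw [Real.norm_eq_abs, abs_of_nonneg (sq_nonneg _)]
            exact hχsq_le t)
      have ig2 : Integrable (fun t => (χ t * δg t z) ^ 2) μ :=
        Integrable.mono' h2 (((mχ.mul mz).pow_const 2).aestronglyMeasurable)
          (ae_of_all _ fun t => by
            show ‖(χ t * δg t z) ^ 2‖ ≤ δg t z ^ 2
            rw [Real.norm_eq_abs, abs_of_nonneg (sq_nonneg _), mul_pow]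
            nlinarith [mul_nonneg (sub_nonneg.mpr (hχsq_le t)) (sq_nonneg (δg t z))])
      have hcs := my_cs (μ := μ) (f := χ) (g := fun t => χ t * δg t z) hfg' if2 ig2
      have e1 : (∫ t, χ t * (χ t * δg t z) ∂μ) = ∫ t, χ t * δg t z ∂μ :=
        integral_congr_ae (ae_of_all _ fun t => by
          show χ t * (χ t * δg t z) = χ t * δg t z
          rw [← mul_assoc, idem t])
      have e2 : (∫ t, χ t ^ 2 ∂μ) = 1 / 2 := by
        rw [show (fun t => χ t ^ 2) = χ from funext fun t => by rw [sq, idem t]]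
        exact hχint
      have e3 : (∫ t, (χ t * δg t z) ^ 2 ∂μ) = ∫ t, χ t * δg t z ^ 2 ∂μ :=
        integral_congr_ae (ae_of_all _ fun t => by
          show (χ t * δg t z) ^ 2 = χ t * δg t z ^ 2
          rw [mul_pow, sq (χ t), idem t])
      rw [e1, e2, e3] at hcs
      linarith
    exact ⟨hhalf chiL chiL_meas chiL_mem chiL_sq IL, hhalf chiR chiR_meas chiR_mem chiR_sq IR⟩
  -- integrability of aF², bF², aF*bF
  have hia2 : Integrable (fun z => aF z ^ 2) μ :=
    Integrable.mono' (hHL_int.div_const 2) ((maF.measurable.pow_const 2).aestronglyMeasurable)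
      (by filter_upwards [hCS] with z hz
          rw [Real.norm_eq_abs, abs_of_nonneg (sq_nonneg _)]
          exact hz.1)
  have hib2 : Integrable (fun z => bF z ^ 2) μ :=
    Integrable.mono' (hHR_int.div_const 2) ((mbF.measurable.pow_const 2).aestronglyMeasurable)
      (by filter_upwards [hCS] with z hz
          rw [Real.norm_eq_abs, abs_of_nonneg (sq_nonneg _)]
          exact hz.2)
  have hiab : Integrable (fun z => aF z * bF z) μ :=
    Integrable.mono' ((hia2.add hib2).div_const 2)
      ((maF.measurable.mul mbF.measurable).aestronglyMeasurable)
      (ae_of_all _ fun z => by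
        rw [norm_mul]
        exact norm_mul_le_half_sq _ _)
  -- a.e. z ≠ 1/2
  have h0half : μ {(1/2 : ℝ)} = 0 := by
    rw [hμdef, Measure.restrict_apply (measurableSet_singleton _)]
    refine le_antisymm ?_ zero_le
    calc volume ({(1/2 : ℝ)} ∩ Icc 0 1) ≤ volume {(1/2 : ℝ)} :=
        measure_mono inter_subset_left
      _ = 0 := Real.volume_singleton
  have zne : ∀ᵐ z ∂μ, z ≠ (1/2 : ℝ) := by
    rw [ae_iff]
    have : {z : ℝ | ¬ z ≠ (1/2 : ℝ)} = {(1/2 : ℝ)} := by ext z; simp [not_not]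
    rw [this]; exact h0half
  -- the main z-level inequality
  have habg : ∀ η : ℝ, 0 < η →
      -((1/4) * (η * (D1 + D2) + η⁻¹ * (P1 + P2))) ≤ ∫ z, aF z * bF z ∂μ := by
    intro η hη
    have hηne : η ≠ 0 := ne_of_gt hη
    have hinv : 0 < η⁻¹ := inv_pos.mpr hη
    set w : ℝ → ℝ := fun z => if z < 1/2 then η * aF z ^ 2 + η⁻¹ * bF z ^ 2
      else η⁻¹ * aF z ^ 2 + η * bF z ^ 2 with hwdef
    have hw_pt : ∀ z, -(w z) ≤ 2 * (aF z * bF z) := by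
      intro z
      by_cases hz : z < 1/2
      · simp only [hwdef, if_pos hz]
        have key : η⁻¹ * (η * aF z + bF z) ^ 2
            = η * aF z ^ 2 + 2 * (aF z * bF z) + η⁻¹ * bF z ^ 2 := by
          field_simp
          ring
        nlinarith [mul_nonneg hinv.le (sq_nonneg (η * aF z + bF z)), key]
      · simp only [hwdef, if_neg hz]
        have key : η⁻¹ * (aF z + η * bF z) ^ 2
            = η⁻¹ * aF z ^ 2 + 2 * (aF z * bF z) + η * bF z ^ 2 := by
          field_simp
          ring
        nlinarith [mul_nonneg hinv.le (sq_nonneg (aF z + η * bF z)), key]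
    have mw : Measurable w := by
      rw [hwdef]
      exact Measurable.ite (measurableSet_lt measurable_id measurable_const)
        (((maF.measurable.pow_const 2).const_mul η).add
          ((mbF.measurable.pow_const 2).const_mul η⁻¹))
        (((maF.measurable.pow_const 2).const_mul η⁻¹).add
          ((mbF.measurable.pow_const 2).const_mul η))
    have hw_nonneg : ∀ z, 0 ≤ w z := by
      intro z
      by_cases hz : z < 1/2
      · simp only [hwdef, if_pos hz]; positivity
      · simp only [hwdef, if_neg hz]; positivity
    have hiw : Integrable w μ :=
      Integrable.mono' (((hia2.add hib2).const_mul (η + η⁻¹))) mw.aestronglyMeasurable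
        (ae_of_all _ fun z => by
          show ‖w z‖ ≤ (η + η⁻¹) * (aF z ^ 2 + bF z ^ 2)
          rw [Real.norm_eq_abs, abs_of_nonneg (hw_nonneg z)]
          have h1 : 0 ≤ η * bF z ^ 2 := by positivity
          have h2 : 0 ≤ η⁻¹ * bF z ^ 2 := by positivity
          have h3 : 0 ≤ η * aF z ^ 2 := by positivity
          have h4 : 0 ≤ η⁻¹ * aF z ^ 2 := by positivity
          by_cases hz : z < 1/2
          · simp only [hwdef, if_pos hz]; nlinarith
          · simp only [hwdef, if_neg hz]; nlinarith)
    have h2ab : -(∫ z, w z ∂μ) ≤ 2 * ∫ z, aF z * bF z ∂μ := by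
      have hmono := integral_mono (f := fun z => -(w z)) (g := fun z => 2 * (aF z * bF z))
        hiw.neg (hiab.const_mul 2) (fun z => hw_pt z)
      rw [integral_neg, integral_const_mul] at hmono
      exact hmono
    -- bound ∫ w
    have iLL : Integrable (fun z => chiL z * HL z) μ :=
      Integrable.mono' hHL_int.norm ((chiL_meas.mul mHL.measurable).aestronglyMeasurable)
        (ae_of_all _ fun z => by
          show ‖chiL z * HL z‖ ≤ ‖HL z‖
          rw [norm_mul]
          calc ‖chiL z‖ * ‖HL z‖ ≤ 1 * ‖HL z‖ :=
              mul_le_mul_of_nonneg_right (chiL_norm z) (norm_nonneg _)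
            _ = ‖HL z‖ := one_mul _)
    have iLR : Integrable (fun z => chiL z * HR z) μ :=
      Integrable.mono' hHR_int.norm ((chiL_meas.mul mHR.measurable).aestronglyMeasurable)
        (ae_of_all _ fun z => by
          show ‖chiL z * HR z‖ ≤ ‖HR z‖
          rw [norm_mul]
          calc ‖chiL z‖ * ‖HR z‖ ≤ 1 * ‖HR z‖ :=
              mul_le_mul_of_nonneg_right (chiL_norm z) (norm_nonneg _)
            _ = ‖HR z‖ := one_mul _)
    have iRL : Integrable (fun z => chiR z * HL z) μ :=
      Integrable.mono' hHL_int.norm ((chiR_meas.mul mHL.measurable).aestronglyMeasurable)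
        (ae_of_all _ fun z => by
          show ‖chiR z * HL z‖ ≤ ‖HL z‖
          rw [norm_mul]
          calc ‖chiR z‖ * ‖HL z‖ ≤ 1 * ‖HL z‖ :=
              mul_le_mul_of_nonneg_right (chiR_norm z) (norm_nonneg _)
            _ = ‖HL z‖ := one_mul _)
    have iRR : Integrable (fun z => chiR z * HR z) μ :=
      Integrable.mono' hHR_int.norm ((chiR_meas.mul mHR.measurable).aestronglyMeasurable)
        (ae_of_all _ fun z => by
          show ‖chiR z * HR z‖ ≤ ‖HR z‖
          rw [norm_mul]
          calc ‖chiR z‖ * ‖HR z‖ ≤ 1 * ‖HR z‖ :=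
              mul_le_mul_of_nonneg_right (chiR_norm z) (norm_nonneg _)
            _ = ‖HR z‖ := one_mul _)
    have hW2int : Integrable (fun z => (η/2) * (chiL z * HL z) + (η⁻¹/2) * (chiL z * HR z)
        + ((η⁻¹/2) * (chiR z * HL z) + (η/2) * (chiR z * HR z))) μ :=
      ((iLL.const_mul _).add (iLR.const_mul _)).add ((iRL.const_mul _).add (iRR.const_mul _))
    have hwW2 : ∀ᵐ z ∂μ, w z ≤ (η/2) * (chiL z * HL z) + (η⁻¹/2) * (chiL z * HR z)
        + ((η⁻¹/2) * (chiR z * HL z) + (η/2) * (chiR z * HR z)) := by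
      filter_upwards [hCS, zne] with z hz hzne
      rw [hwdef]
      rcases lt_or_gt_of_ne hzne with h' | h'
      · have hL1 : chiL z = 1 := by simp only [chiL, if_pos h']
        have hR0 : chiR z = 0 := by simp only [chiR, if_neg (asymm h')]
        simp only [if_pos h', hL1, hR0]
        have b1 : η * aF z ^ 2 ≤ η * (HL z / 2) := mul_le_mul_of_nonneg_left hz.1 hη.le
        have b2 : η⁻¹ * bF z ^ 2 ≤ η⁻¹ * (HR z / 2) := mul_le_mul_of_nonneg_left hz.2 hinv.le
        ring_nf
        ring_nf at b1 b2
        linarith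
      · have hL0 : chiL z = 0 := by simp only [chiL, if_neg (asymm h')]
        have hR1 : chiR z = 1 := by simp only [chiR, if_pos h']
        have hnlt : ¬ z < 1/2 := not_lt_of_gt h'
        simp only [if_neg hnlt, hL0, hR1]
        have b1 : η⁻¹ * aF z ^ 2 ≤ η⁻¹ * (HL z / 2) := mul_le_mul_of_nonneg_left hz.1 hinv.le
        have b2 : η * bF z ^ 2 ≤ η * (HR z / 2) := mul_le_mul_of_nonneg_left hz.2 hη.le
        ring_nf
        ring_nf at b1 b2
        linarith
    have hMLL : ∫ z, chiL z * HL z ∂μ = D1 := marg chiL chiL chiL_meas chiL_meas chiL_norm chiL_norm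
    have hMLR : ∫ z, chiL z * HR z ∂μ = P1 := by
      have h := marg chiL chiR chiL_meas chiR_meas chiL_norm chiR_norm
      exact h
    have hMRL : ∫ z, chiR z * HL z ∂μ = P2 := by
      have h := marg chiR chiL chiR_meas chiL_meas chiR_norm chiL_norm
      exact h
    have hMRR : ∫ z, chiR z * HR z ∂μ = D2 := marg chiR chiR chiR_meas chiR_meas chiR_norm chiR_norm
    have hwle : ∫ z, w z ∂μ ≤ (η/2) * D1 + (η⁻¹/2) * P1 + ((η⁻¹/2) * P2 + (η/2) * D2) := by
      calc ∫ z, w z ∂μ ≤ ∫ z, ((η/2) * (chiL z * HL z) + (η⁻¹/2) * (chiL z * HR z)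
            + ((η⁻¹/2) * (chiR z * HL z) + (η/2) * (chiR z * HR z))) ∂μ :=
          integral_mono_ae hiw hW2int hwW2
        _ = (η/2) * (∫ z, chiL z * HL z ∂μ) + (η⁻¹/2) * (∫ z, chiL z * HR z ∂μ)
            + ((η⁻¹/2) * (∫ z, chiR z * HL z ∂μ) + (η/2) * (∫ z, chiR z * HR z ∂μ)) := by
          have s1 : ∫ z, ((η/2) * (chiL z * HL z) + (η⁻¹/2) * (chiL z * HR z))
              + ((η⁻¹/2) * (chiR z * HL z) + (η/2) * (chiR z * HR z)) ∂μ
              = (∫ z, (η/2) * (chiL z * HL z) + (η⁻¹/2) * (chiL z * HR z) ∂μ)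
              + ∫ z, (η⁻¹/2) * (chiR z * HL z) + (η/2) * (chiR z * HR z) ∂μ :=
            integral_add ((iLL.const_mul _).add (iLR.const_mul _))
              ((iRL.const_mul _).add (iRR.const_mul _))
          have s2 : ∫ z, (η/2) * (chiL z * HL z) + (η⁻¹/2) * (chiL z * HR z) ∂μ
              = (∫ z, (η/2) * (chiL z * HL z) ∂μ) + ∫ z, (η⁻¹/2) * (chiL z * HR z) ∂μ :=
            integral_add (iLL.const_mul _) (iLR.const_mul _)
          have s3 : ∫ z, (η⁻¹/2) * (chiR z * HL z) + (η/2) * (chiR z * HR z) ∂μ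
              = (∫ z, (η⁻¹/2) * (chiR z * HL z) ∂μ) + ∫ z, (η/2) * (chiR z * HR z) ∂μ :=
            integral_add (iRL.const_mul _) (iRR.const_mul _)
          have s4 : ∫ z, (η/2) * (chiL z * HL z) ∂μ = (η/2) * ∫ z, chiL z * HL z ∂μ :=
            integral_const_mul _ _
          have s5 : ∫ z, (η⁻¹/2) * (chiL z * HR z) ∂μ = (η⁻¹/2) * ∫ z, chiL z * HR z ∂μ :=
            integral_const_mul _ _
          have s6 : ∫ z, (η⁻¹/2) * (chiR z * HL z) ∂μ = (η⁻¹/2) * ∫ z, chiR z * HL z ∂μ :=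
            integral_const_mul _ _
          have s7 : ∫ z, (η/2) * (chiR z * HR z) ∂μ = (η/2) * ∫ z, chiR z * HR z ∂μ :=
            integral_const_mul _ _
          rw [s1, s2, s3, s4, s5, s6, s7]
        _ = (η/2) * D1 + (η⁻¹/2) * P1 + ((η⁻¹/2) * P2 + (η/2) * D2) := by
          rw [hMLL, hMLR, hMRL, hMRR]
    linarith [h2ab, hwle]
  -- pointwise splitting of gEps and I0dd ∘ gEps
  have chiLR_vals : ∀ x y : ℝ, ((x < 1/2 ∧ 1/2 < y) ∨ (y < 1/2 ∧ 1/2 < x)) →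
      chiL x * chiR y + chiR x * chiL y = 1 := by
    rintro x y (⟨h1, h2⟩ | ⟨h1, h2⟩)
    · have e1 : chiL x = 1 := by simp only [chiL, if_pos h1]
      have e2 : chiR y = 1 := by simp only [chiR, if_pos h2]
      have e3 : chiR x = 0 := by simp only [chiR, if_neg (asymm h1)]
      have e4 : chiL y = 0 := by simp only [chiL, if_neg (asymm h2)]
      rw [e1, e2, e3, e4]; ring
    · have e1 : chiL y = 1 := by simp only [chiL, if_pos h1]
      have e2 : chiR x = 1 := by simp only [chiR, if_pos h2]
      have e3 : chiR y = 0 := by simp only [chiR, if_neg (asymm h1)]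
      have e4 : chiL x = 0 := by simp only [chiL, if_neg (asymm h2)]
      rw [e1, e2, e3, e4]; ring
  have chiLR_vals0 : ∀ x y : ℝ, ¬((x < 1/2 ∧ 1/2 < y) ∨ (y < 1/2 ∧ 1/2 < x)) →
      chiL x * chiR y = 0 ∧ chiR x * chiL y = 0 := by
    intro x y hcond
    push_neg at hcond
    constructor
    · by_cases hx : x < 1/2
      · have : ¬ (1/2 : ℝ) < y := not_lt.mpr (hcond.1 hx)
        simp only [chiR, if_neg this, mul_zero]
      · simp only [chiL, if_neg hx, zero_mul]
    · by_cases hy : y < 1/2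
      · have : ¬ (1/2 : ℝ) < x := not_lt.mpr (hcond.2 hy)
        simp only [chiR, if_neg this, zero_mul]
      · simp only [chiL, if_neg hy, mul_zero]
  have hgsplit : ∀ x y : ℝ, gEps e ε x y
      = ε + (c * (chiL x * chiR y) + c * (chiR x * chiL y)) := by
    intro x y
    show (if (x < 1/2 ∧ 1/2 < y) ∨ (y < 1/2 ∧ 1/2 < x) then 2 * e - ε else ε)
      = ε + (c * (chiL x * chiR y) + c * (chiR x * chiL y))
    by_cases hcond : (x < 1/2 ∧ 1/2 < y) ∨ (y < 1/2 ∧ 1/2 < x)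
    · rw [if_pos hcond, hcdef]
      have h := chiLR_vals x y hcond
      linear_combination (2 * ε - 2 * e) * h
    · rw [if_neg hcond]
      obtain ⟨z1, z2⟩ := chiLR_vals0 x y hcond
      rw [z1, z2]; ring
  have hIsplit : ∀ x y : ℝ, I0dd (gEps e ε x y)
      = cε + ((c₂ - cε) * (chiL x * chiR y) + (c₂ - cε) * (chiR x * chiL y)) := by
    intro x y
    by_cases hcond : (x < 1/2 ∧ 1/2 < y) ∨ (y < 1/2 ∧ 1/2 < x)
    · have hg : gEps e ε x y = 2 * e - ε := if_pos hcond
      rw [hg, ← hc₂def]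
      have h := chiLR_vals x y hcond
      linear_combination (cε - c₂) * h
    · have hg : gEps e ε x y = ε := if_neg hcond
      rw [hg, ← hcεdef]
      obtain ⟨z1, z2⟩ := chiLR_vals0 x y hcond
      rw [z1, z2]; ring
  -- measurability and boundedness of gEps
  have hgE_meas : Measurable (fun p : ℝ × ℝ => gEps e ε p.1 p.2) := by
    show Measurable fun p : ℝ × ℝ =>
      if (p.1 < 1/2 ∧ 1/2 < p.2) ∨ (p.2 < 1/2 ∧ 1/2 < p.1) then 2 * e - ε else ε
    refine Measurable.ite ?_ measurable_const measurable_const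
    exact (((measurableSet_lt measurable_fst measurable_const).inter
        (measurableSet_lt measurable_const measurable_snd)).union
      ((measurableSet_lt measurable_snd measurable_const).inter
        (measurableSet_lt measurable_const measurable_fst)))
  have hgE_bound : ∀ x y : ℝ, ‖gEps e ε x y‖ ≤ 1 := by
    intro x y
    show ‖if (x < 1/2 ∧ 1/2 < y) ∨ (y < 1/2 ∧ 1/2 < x) then 2 * e - ε else ε‖ ≤ 1
    split_ifs
    · rw [Real.norm_eq_abs, abs_of_nonneg h2e0.le]; linarith
    · rw [Real.norm_eq_abs, abs_of_nonneg hε0.le]; linarith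
  -- the triple-integral identity
  have inner_eq : ∀ x y : ℝ, (∫ z, gEps e ε x y * δg x z * δg y z ∂μ)
      = gEps e ε x y * k (x, y) := by
    intro x y
    have hfe : (fun z => gEps e ε x y * δg x z * δg y z)
        = fun z => gEps e ε x y * (δg x z * δg y z) := funext fun z => mul_assoc _ _ _
    rw [hfe, integral_const_mul]
  have hgk_int : Integrable (fun p : ℝ × ℝ => gEps e ε p.1 p.2 * k p) ρ := by
    refine Integrable.mono' hHsum_int
      ((hgE_meas.mul SMk.measurable).aestronglyMeasurable) ?_
    filter_upwards [hk_ae_bound] with p hp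
    rw [norm_mul]
    calc ‖gEps e ε p.1 p.2‖ * ‖k p‖ ≤ 1 * ‖k p‖ :=
        mul_le_mul_of_nonneg_right (hgE_bound _ _) (norm_nonneg _)
      _ = ‖k p‖ := one_mul _
      _ ≤ (H p.1 + H p.2) / 2 := hp
  have ikLR : Integrable (fun p : ℝ × ℝ => chiL p.1 * chiR p.2 * k p) ρ := by
    refine Integrable.mono' hHsum_int
      ((wmeasLR.mul SMk.measurable).aestronglyMeasurable) ?_
    filter_upwards [hk_ae_bound] with p hp
    rw [norm_mul]
    calc ‖chiL p.1 * chiR p.2‖ * ‖k p‖ ≤ 1 * ‖k p‖ :=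
        mul_le_mul_of_nonneg_right (wb _ _ chiL_norm chiR_norm p) (norm_nonneg _)
      _ = ‖k p‖ := one_mul _
      _ ≤ (H p.1 + H p.2) / 2 := hp
  have ikRL : Integrable (fun p : ℝ × ℝ => chiR p.1 * chiL p.2 * k p) ρ := by
    refine Integrable.mono' hHsum_int
      ((wmeasRL.mul SMk.measurable).aestronglyMeasurable) ?_
    filter_upwards [hk_ae_bound] with p hp
    rw [norm_mul]
    calc ‖chiR p.1 * chiL p.2‖ * ‖k p‖ ≤ 1 * ‖k p‖ :=
        mul_le_mul_of_nonneg_right (wb _ _ chiR_norm chiL_norm p) (norm_nonneg _)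
      _ = ‖k p‖ := one_mul _
      _ ≤ (H p.1 + H p.2) / 2 := hp
  have hTT : (∫ x, ∫ y, ∫ z, gEps e ε x y * δg x z * δg y z ∂μ ∂μ ∂μ)
      = ε * (∫ z, SF z * SF z ∂μ)
        + (c * (∫ z, aF z * bF z ∂μ) + c * (∫ z, bF z * aF z ∂μ)) := by
    have e0 : (∫ x, ∫ y, ∫ z, gEps e ε x y * δg x z * δg y z ∂μ ∂μ ∂μ)
        = ∫ x, ∫ y, gEps e ε x y * k (x, y) ∂μ ∂μ := by
      refine integral_congr_ae (ae_of_all _ fun x => ?_)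
      show (∫ y, ∫ z, gEps e ε x y * δg x z * δg y z ∂μ ∂μ) = ∫ y, gEps e ε x y * k (x, y) ∂μ
      refine integral_congr_ae (ae_of_all _ fun y => ?_)
      show (∫ z, gEps e ε x y * δg x z * δg y z ∂μ) = gEps e ε x y * k (x, y)
      exact inner_eq x y
    have e1 : (∫ x, ∫ y, gEps e ε x y * k (x, y) ∂μ ∂μ)
        = ∫ p, gEps e ε p.1 p.2 * k p ∂ρ := by
      rw [hρdef]
      exact integral_integral (f := fun x y => gEps e ε x y * k (x, y)) hgk_int
    have psplit : (fun p : ℝ × ℝ => gEps e ε p.1 p.2 * k p)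
        = fun p => ε * k p + (c * (chiL p.1 * chiR p.2 * k p)
          + c * (chiR p.1 * chiL p.2 * k p)) := by
      funext p
      rw [hgsplit p.1 p.2]
      ring
    have e2 : (∫ p, gEps e ε p.1 p.2 * k p ∂ρ)
        = ε * (∫ p, k p ∂ρ) + (c * (∫ p, chiL p.1 * chiR p.2 * k p ∂ρ)
          + c * (∫ p, chiR p.1 * chiL p.2 * k p ∂ρ)) := by
      rw [psplit]
      have s1 : ∫ p, (ε * k p + (c * (chiL p.1 * chiR p.2 * k p)
            + c * (chiR p.1 * chiL p.2 * k p))) ∂ρ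
          = (∫ p, ε * k p ∂ρ) + ∫ p, (c * (chiL p.1 * chiR p.2 * k p)
            + c * (chiR p.1 * chiL p.2 * k p)) ∂ρ :=
        integral_add (hk_int.const_mul _) ((ikLR.const_mul _).add (ikRL.const_mul _))
      have s2 : ∫ p, (c * (chiL p.1 * chiR p.2 * k p)
            + c * (chiR p.1 * chiL p.2 * k p)) ∂ρ
          = (∫ p, c * (chiL p.1 * chiR p.2 * k p) ∂ρ)
            + ∫ p, c * (chiR p.1 * chiL p.2 * k p) ∂ρ :=
        integral_add (ikLR.const_mul _) (ikRL.const_mul _)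
      have s3 : ∫ p, ε * k p ∂ρ = ε * ∫ p, k p ∂ρ := integral_const_mul _ _
      have s4 : ∫ p, c * (chiL p.1 * chiR p.2 * k p) ∂ρ
          = c * ∫ p, chiL p.1 * chiR p.2 * k p ∂ρ := integral_const_mul _ _
      have s5 : ∫ p, c * (chiR p.1 * chiL p.2 * k p) ∂ρ
          = c * ∫ p, chiR p.1 * chiL p.2 * k p ∂ρ := integral_const_mul _ _
      rw [s1, s2, s3, s4, s5]
    have w1 : (∫ p, k p ∂ρ) = ∫ z, SF z * SF z ∂μ := by
      have h := swap_key (fun _ => 1) (fun _ => 1) measurable_const measurable_const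
        (fun t => by norm_num) (fun t => by norm_num)
      simp only [one_mul] at h
      exact h
    have w2 : (∫ p, chiL p.1 * chiR p.2 * k p ∂ρ) = ∫ z, aF z * bF z ∂μ :=
      swap_key chiL chiR chiL_meas chiR_meas chiL_norm chiR_norm
    have w3 : (∫ p, chiR p.1 * chiL p.2 * k p ∂ρ) = ∫ z, bF z * aF z ∂μ :=
      swap_key chiR chiL chiR_meas chiL_meas chiR_norm chiL_norm
    rw [e0, e1, e2, w1, w2, w3]
  -- the slack identity
  have hRHSM : (∫ x, ∫ y, δg x y ^ 2 ∂μ ∂μ) = M := by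
    rw [hMdef, hρdef]
    exact integral_integral (f := fun x y => δg x y ^ 2) Hsq
  have hSlack : (∫ x, ∫ y, I0dd (gEps e ε x y) * δg x y ^ 2 ∂μ ∂μ)
      = cε * M + ((c₂ - cε) * P1 + (c₂ - cε) * P2) := by
    have hIpt : ∀ x y : ℝ, I0dd (gEps e ε x y) * δg x y ^ 2
        = cε * δg x y ^ 2 + ((c₂ - cε) * (chiL x * chiR y * δg x y ^ 2)
          + (c₂ - cε) * (chiR x * chiL y * δg x y ^ 2)) := by
      intro x y
      rw [hIsplit x y]
      ring
    have e0 : (∫ x, ∫ y, I0dd (gEps e ε x y) * δg x y ^ 2 ∂μ ∂μ)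
        = ∫ x, ∫ y, (cε * δg x y ^ 2 + ((c₂ - cε) * (chiL x * chiR y * δg x y ^ 2)
          + (c₂ - cε) * (chiR x * chiL y * δg x y ^ 2))) ∂μ ∂μ := by
      refine integral_congr_ae (ae_of_all _ fun x => ?_)
      show (∫ y, I0dd (gEps e ε x y) * δg x y ^ 2 ∂μ) = _
      refine integral_congr_ae (ae_of_all _ fun y => ?_)
      exact hIpt x y
    have e1 : (∫ x, ∫ y, (cε * δg x y ^ 2 + ((c₂ - cε) * (chiL x * chiR y * δg x y ^ 2)
          + (c₂ - cε) * (chiR x * chiL y * δg x y ^ 2))) ∂μ ∂μ)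
        = ∫ p : ℝ × ℝ, (cε * δg p.1 p.2 ^ 2 + ((c₂ - cε) * (chiL p.1 * chiR p.2 * δg p.1 p.2 ^ 2)
          + (c₂ - cε) * (chiR p.1 * chiL p.2 * δg p.1 p.2 ^ 2))) ∂ρ := by
      rw [hρdef]
      exact integral_integral
        (f := fun x y => cε * δg x y ^ 2 + ((c₂ - cε) * (chiL x * chiR y * δg x y ^ 2)
          + (c₂ - cε) * (chiR x * chiL y * δg x y ^ 2)))
        ((Hsq.const_mul _).add ((intLR.const_mul _).add (intRL.const_mul _)))
    have s1 : ∫ p : ℝ × ℝ, (cε * δg p.1 p.2 ^ 2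
          + ((c₂ - cε) * (chiL p.1 * chiR p.2 * δg p.1 p.2 ^ 2)
          + (c₂ - cε) * (chiR p.1 * chiL p.2 * δg p.1 p.2 ^ 2))) ∂ρ
        = (∫ p, cε * δg p.1 p.2 ^ 2 ∂ρ)
          + ∫ p, ((c₂ - cε) * (chiL p.1 * chiR p.2 * δg p.1 p.2 ^ 2)
          + (c₂ - cε) * (chiR p.1 * chiL p.2 * δg p.1 p.2 ^ 2)) ∂ρ :=
      integral_add (Hsq.const_mul _) ((intLR.const_mul _).add (intRL.const_mul _))
    have s2 : ∫ p : ℝ × ℝ, ((c₂ - cε) * (chiL p.1 * chiR p.2 * δg p.1 p.2 ^ 2)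
          + (c₂ - cε) * (chiR p.1 * chiL p.2 * δg p.1 p.2 ^ 2)) ∂ρ
        = (∫ p, (c₂ - cε) * (chiL p.1 * chiR p.2 * δg p.1 p.2 ^ 2) ∂ρ)
          + ∫ p, (c₂ - cε) * (chiR p.1 * chiL p.2 * δg p.1 p.2 ^ 2) ∂ρ :=
      integral_add (intLR.const_mul _) (intRL.const_mul _)
    have s3 : ∫ p : ℝ × ℝ, cε * δg p.1 p.2 ^ 2 ∂ρ = cε * M := integral_const_mul _ _
    have s4 : ∫ p : ℝ × ℝ, (c₂ - cε) * (chiL p.1 * chiR p.2 * δg p.1 p.2 ^ 2) ∂ρ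
        = (c₂ - cε) * P1 := integral_const_mul _ _
    have s5 : ∫ p : ℝ × ℝ, (c₂ - cε) * (chiR p.1 * chiL p.2 * δg p.1 p.2 ^ 2) ∂ρ
        = (c₂ - cε) * P2 := integral_const_mul _ _
    rw [e0, e1, s1, s2, s3, s4, s5]
  -- splitting M into the four regions
  have hMsplit : M = D1 + P1 + P2 + D2 := by
    have hfst_ne : ∀ᵐ p : ℝ × ℝ ∂ρ, p.1 ≠ (1/2 : ℝ) :=
      Measure.quasiMeasurePreserving_fst.ae zne
    have hsnd_ne : ∀ᵐ p : ℝ × ℝ ∂ρ, p.2 ≠ (1/2 : ℝ) :=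
      Measure.quasiMeasurePreserving_snd.ae zne
    have hptM : ∀ᵐ p : ℝ × ℝ ∂ρ, δg p.1 p.2 ^ 2
        = chiL p.1 * chiL p.2 * δg p.1 p.2 ^ 2 + chiL p.1 * chiR p.2 * δg p.1 p.2 ^ 2
          + chiR p.1 * chiL p.2 * δg p.1 p.2 ^ 2 + chiR p.1 * chiR p.2 * δg p.1 p.2 ^ 2 := by
      filter_upwards [hfst_ne, hsnd_ne] with p h1 h2
      have c1 := chi_sum h1
      have c2 := chi_sum h2
      calc δg p.1 p.2 ^ 2
          = ((chiL p.1 + chiR p.1) * (chiL p.2 + chiR p.2)) * δg p.1 p.2 ^ 2 := by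
            rw [c1, c2]; ring
        _ = chiL p.1 * chiL p.2 * δg p.1 p.2 ^ 2 + chiL p.1 * chiR p.2 * δg p.1 p.2 ^ 2
            + chiR p.1 * chiL p.2 * δg p.1 p.2 ^ 2
            + chiR p.1 * chiR p.2 * δg p.1 p.2 ^ 2 := by ring
    have e0 : M = ∫ p : ℝ × ℝ, (chiL p.1 * chiL p.2 * δg p.1 p.2 ^ 2
        + chiL p.1 * chiR p.2 * δg p.1 p.2 ^ 2
        + chiR p.1 * chiL p.2 * δg p.1 p.2 ^ 2
        + chiR p.1 * chiR p.2 * δg p.1 p.2 ^ 2) ∂ρ := integral_congr_ae hptM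
    have s1 : ∫ p : ℝ × ℝ, (chiL p.1 * chiL p.2 * δg p.1 p.2 ^ 2
          + chiL p.1 * chiR p.2 * δg p.1 p.2 ^ 2
          + chiR p.1 * chiL p.2 * δg p.1 p.2 ^ 2
          + chiR p.1 * chiR p.2 * δg p.1 p.2 ^ 2) ∂ρ
        = (∫ p : ℝ × ℝ, (chiL p.1 * chiL p.2 * δg p.1 p.2 ^ 2
          + chiL p.1 * chiR p.2 * δg p.1 p.2 ^ 2
          + chiR p.1 * chiL p.2 * δg p.1 p.2 ^ 2) ∂ρ) + D2 :=
      integral_add ((intLL.add intLR).add intRL) intRR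
    have s2 : ∫ p : ℝ × ℝ, (chiL p.1 * chiL p.2 * δg p.1 p.2 ^ 2
          + chiL p.1 * chiR p.2 * δg p.1 p.2 ^ 2
          + chiR p.1 * chiL p.2 * δg p.1 p.2 ^ 2) ∂ρ
        = (∫ p : ℝ × ℝ, (chiL p.1 * chiL p.2 * δg p.1 p.2 ^ 2
          + chiL p.1 * chiR p.2 * δg p.1 p.2 ^ 2) ∂ρ) + P2 :=
      integral_add (intLL.add intLR) intRL
    have s3 : ∫ p : ℝ × ℝ, (chiL p.1 * chiL p.2 * δg p.1 p.2 ^ 2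
          + chiL p.1 * chiR p.2 * δg p.1 p.2 ^ 2) ∂ρ = D1 + P1 :=
      integral_add intLL intLR
    rw [e0, s1, s2, s3]
  -- final assembly
  clear_value G cε c₂ c Λ D1 D2 P1 P2 M
  have hc₂1 : (0:ℝ) < c₂ - 1 := by linarith
  have hΛcpos : 0 < Λ * c := mul_pos hΛpos hc
  have hAle : (Λ * c) ^ 2 / (c₂ - 1) ≤ cε - 1 := by
    have h1 : (Λ * c) ^ 2 / (c₂ - 1) ≤ (Λ * c) ^ 2 :=
      div_le_self (sq_nonneg _) (by linarith)
    linarith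
  have hexists : ∃ η : ℝ, 0 < η ∧ Λ * c * η ≤ cε - 1 ∧ Λ * c * η⁻¹ = c₂ - 1 := by
    refine ⟨Λ * c / (c₂ - 1), div_pos hΛcpos hc₂1, ?_, ?_⟩
    · calc Λ * c * (Λ * c / (c₂ - 1)) = (Λ * c) ^ 2 / (c₂ - 1) := by ring
        _ ≤ cε - 1 := hAle
    · rw [inv_div]
      field_simp
  obtain ⟨η, hη, hA', hB⟩ := hexists
  have hab := habg η hη
  have hsum : (∫ z, bF z * aF z ∂μ) = ∫ z, aF z * bF z ∂μ :=
    integral_congr_ae (ae_of_all _ fun z => mul_comm _ _)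
  have hSS : 0 ≤ ∫ z, SF z * SF z ∂μ := integral_nonneg fun z => mul_self_nonneg _
  have hDbound : Λ * c * η * (D1 + D2) ≤ (cε - 1) * (D1 + D2) := by
    have h2 : Λ * c * η * (D1 + D2) ≤ (cε - 1) * (D1 + D2) :=
      mul_le_mul_of_nonneg_right hA' (by linarith [hD1_nonneg, hD2_nonneg])
    exact h2
  have habΛ := mul_le_mul_of_nonneg_left hab hΛcpos.le
  have hfinal_ab : -((1/4) * ((cε - 1) * (D1 + D2) + (c₂ - 1) * (P1 + P2)))
      ≤ Λ * c * (∫ z, aF z * bF z ∂μ) := by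
    have hexp : Λ * c * (-((1/4) * (η * (D1 + D2) + η⁻¹ * (P1 + P2))))
        = -((1/4) * ((Λ * c * η) * (D1 + D2) + (Λ * c * η⁻¹) * (P1 + P2))) := by ring
    rw [hexp, hB] at habΛ
    linarith [habΛ, hDbound]
  have hεISS : 0 ≤ Λ * (ε * ∫ z, SF z * SF z ∂μ) :=
    mul_nonneg hΛpos.le (mul_nonneg hε0.le hSS)
  rw [ge_iff_le, hTT, hSlack, hRHSM, hMsplit, hsum]
  have key1 : Λ * (ε * (∫ z, SF z * SF z ∂μ)
      + (c * (∫ z, aF z * bF z ∂μ) + c * (∫ z, aF z * bF z ∂μ)))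
      = Λ * (ε * (∫ z, SF z * SF z ∂μ)) + 2 * (Λ * c * (∫ z, aF z * bF z ∂μ)) := by ring
  rw [key1]
  linarith [hfinal_ab, hεISS, hD1_nonneg, hD2_nonneg, hP1_nonneg, hP2_nonneg]

lemma tendsto_eps (e : ℝ) (he0 : 0 < e) (he : e < 1 / 2) :
    Tendsto (fun ε : ℝ => ε * (I0d (2 * e - ε) - I0d ε) ^ 2) (𝓝[>] (0:ℝ)) (𝓝 0) := by
  have hsq : Tendsto (fun ε : ℝ => Real.sqrt ε) (𝓝[>] (0:ℝ)) (𝓝 0) := by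
    have := (Real.continuous_sqrt.tendsto 0)
    simpa using this.mono_left nhdsWithin_le_nhds
  have hI : Tendsto (fun ε : ℝ => I0d (2 * e - ε)) (𝓝[>] (0:ℝ)) (𝓝 (I0d (2 * e))) := by
    have hc : ContinuousAt (fun ε : ℝ => I0d (2 * e - ε)) 0 := by
      unfold I0d
      have h1 : ContinuousAt (fun ε : ℝ => Real.log (2 * e - ε)) 0 :=
        (Real.continuousAt_log (by norm_num; linarith)).comp (by fun_prop)
      have h2 : ContinuousAt (fun ε : ℝ => Real.log (1 - (2 * e - ε))) 0 :=
        (Real.continuousAt_log (by norm_num; linarith)).comp (by fun_prop)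
      exact ((h1.sub h2).div_const 2)
    simpa using hc.continuousWithinAt.tendsto
  have hl1 : Tendsto (fun ε : ℝ => Real.log (1 - ε)) (𝓝[>] (0:ℝ)) (𝓝 0) := by
    have hc : ContinuousAt (fun ε : ℝ => Real.log (1 - ε)) 0 :=
      (Real.continuousAt_log (by norm_num)).comp (by fun_prop)
    have : Real.log (1 - 0) = 0 := by norm_num
    simpa [this] using hc.continuousWithinAt.tendsto
  have hlog : Tendsto (fun ε : ℝ => Real.sqrt ε * Real.log ε) (𝓝[>] (0:ℝ)) (𝓝 0) := by
    have h := tendsto_log_mul_rpow_nhdsGT_zero (r := 1/2) (by norm_num)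
    apply h.congr'
    filter_upwards [self_mem_nhdsWithin] with x hx
    rw [Real.sqrt_eq_rpow]
    ring
  have hG : Tendsto (fun ε : ℝ => Real.sqrt ε * (I0d (2 * e - ε) - I0d ε)) (𝓝[>] (0:ℝ)) (𝓝 0) := by
    have hcomb : Tendsto (fun ε : ℝ => Real.sqrt ε * I0d (2 * e - ε)
        - (Real.sqrt ε * Real.log ε) / 2 + (Real.sqrt ε * Real.log (1 - ε)) / 2)
        (𝓝[>] (0:ℝ)) (𝓝 (0 * I0d (2 * e) - 0 / 2 + (0 * 0) / 2)) := by
      exact (((hsq.mul hI).sub (hlog.div_const 2)).add ((hsq.mul hl1).div_const 2))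
    have : (0:ℝ) * I0d (2 * e) - 0 / 2 + (0 * 0) / 2 = 0 := by ring
    rw [this] at hcomb
    apply hcomb.congr
    intro x
    unfold I0d
    ring
  have hGsq : Tendsto (fun ε : ℝ => (Real.sqrt ε * (I0d (2 * e - ε) - I0d ε)) ^ 2)
      (𝓝[>] (0:ℝ)) (𝓝 0) := by
    have := hG.pow 2
    simpa using this
  apply hGsq.congr'
  filter_upwards [self_mem_nhdsWithin] with x hx
  have hx0 : (0:ℝ) ≤ x := le_of_lt hx
  rw [mul_pow, Real.sq_sqrt hx0]

end AuxSVB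

open Function Topology

/-- second-variation bound. For `e < 1/2` and all sufficiently
    small `ε > 0`, for every symmetric square-integrable `δg`,
    `3λ₂ ∭ g δg δg + (1/2) ∬ I₀''(g) δg² ≥ (1/2) ∬ δg²`. -/
theorem second_variation_bound (e : ℝ) (he0 : 0 < e) (he : e < 1 / 2) :
    ∃ ε₀ > 0, ∀ ε : ℝ, 0 < ε → ε < ε₀ →
      ∀ δg : ℝ → ℝ → ℝ, Measurable (Function.uncurry δg) →
        (∀ x y, δg x y = δg y x) →
        IntegrableOn (fun q : ℝ × ℝ => (δg q.1 q.2) ^ 2) (Icc (0 : ℝ) 1 ×ˢ Icc (0 : ℝ) 1) →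
        3 * ((I0d (2 * e - ε) - I0d ε) / (6 * (e - ε) ^ 2)) *
            (∫ x in Icc (0 : ℝ) 1, ∫ y in Icc (0 : ℝ) 1, ∫ z in Icc (0 : ℝ) 1,
              gEps e ε x y * δg x z * δg y z) +
          (1 / 2) * (∫ x in Icc (0 : ℝ) 1, ∫ y in Icc (0 : ℝ) 1,
              I0dd (gEps e ε x y) * (δg x y) ^ 2) ≥
        (1 / 2) * (∫ x in Icc (0 : ℝ) 1, ∫ y in Icc (0 : ℝ) 1, (δg x y) ^ 2) := by
  have htend := tendsto_eps e he0 he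
  have hpos : (0:ℝ) < e ^ 2 / 16 := by positivity
  have hev : ∀ᶠ ε in 𝓝[>] (0:ℝ), ε * (I0d (2 * e - ε) - I0d ε) ^ 2 < e ^ 2 / 16 :=
    htend.eventually_lt_const hpos
  obtain ⟨u, hu0, hsub⟩ := mem_nhdsGT_iff_exists_Ioo_subset.mp hev
  refine ⟨min u (min (e / 2) (1 / 4)), ?_, ?_⟩
  · have h1 : (0:ℝ) < u := hu0
    have h2 : (0:ℝ) < e / 2 := by linarith
    exact lt_min h1 (lt_min h2 (by norm_num))
  intro ε hε0 hεlt δg mδ sδ Hint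
  have hεu : ε < u := lt_of_lt_of_le hεlt (min_le_left _ _)
  have hεe2 : ε < e / 2 :=
    lt_of_lt_of_le hεlt (le_trans (min_le_right _ _) (min_le_left _ _))
  have hε4 : ε < 1 / 4 :=
    lt_of_lt_of_le hεlt (le_trans (min_le_right _ _) (min_le_right _ _))
  have hεe : ε < e := by linarith
  have hf : ε * (I0d (2 * e - ε) - I0d ε) ^ 2 < e ^ 2 / 16 := hsub ⟨hε0, hεu⟩
  have hnum : (I0d (2 * e - ε) - I0d ε) ^ 2 / (e - ε) ^ 2 ≤ I0dd ε - 1 := by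
    set Gv : ℝ := I0d (2 * e - ε) - I0d ε with hGv
    clear_value Gv
    have hee : (0:ℝ) < e - ε := by linarith
    have hsqpos : (0:ℝ) < (e - ε) ^ 2 := by positivity
    have h4ε : (0:ℝ) < 4 * ε := by linarith
    have step1 : Gv ^ 2 / (e - ε) ^ 2 ≤ 1 / (4 * ε) := by
      rw [div_le_div_iff₀ hsqpos h4ε]
      have hb : e ^ 2 / 4 ≤ (e - ε) ^ 2 := by nlinarith [mul_nonneg (by linarith : (0:ℝ) ≤ e / 2 - ε) (by linarith : (0:ℝ) ≤ 3 * e / 2 - ε)]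
      nlinarith [hf, hb]
    have step2 : 1 / (4 * ε) ≤ I0dd ε - 1 := by
      unfold I0dd
      have h1ε : (0:ℝ) < 1 - ε := by linarith
      have e1 : (1:ℝ) ≤ 1 / (1 - ε) := by
        rw [le_div_iff₀ h1ε]; linarith
      have h4 : (1:ℝ) ≤ 1 / (4 * ε) := by
        rw [le_div_iff₀ h4ε]; linarith
      have hq : 1 / ε = 4 * (1 / (4 * ε)) := by
        field_simp
      linarith
    linarith
  exact key_bound e ε he0 he hε0 hεe hnum δg mδ sδ Hint
end

section
/- Suppose there exists ε₀ ∈ (0,1) such that for all ε ∈ (0, ε₀) and all e with ε < e < (1+ε)/2, one has S(e, e³ − (e−ε)³) = −(1/2)[I₀(ε) + I₀(2e−ε)]. Then there exists a point (e*, t*) in the interior (in ℝ²) of R at which S is not real-analytic, i.e., S does not agree with any real-analytic function on any open neighborhood of (e*, t*). -/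
open MeasureTheory Real Set Filter

/-- The set `R` of achievable pairs `(e(g), t(g))`. -/
def Rset : Set (ℝ × ℝ) :=
  {q | ∃ g, IsGraphon g ∧ edgeDensity g = q.1 ∧ triangleDensity g = q.2}

/-- The entropy `S(e,t) = −inf { I(g) : e(g) = e, t(g) = t }`. -/
noncomputable def entropy (e t : ℝ) : ℝ :=
  -sInf (rate '' {g | IsGraphon g ∧ edgeDensity g = e ∧ triangleDensity g = t})

/-! ### Auxiliary material for the proof -/

noncomputable section AuxForProof

open MeasureTheory Real Set Filter

/-- The ±1 step function on `[0,1]`. -/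
def hstep (x : ℝ) : ℝ := if x ≤ 1/2 then 1 else -1

lemma hstep_sq (x : ℝ) : hstep x * hstep x = 1 := by
  unfold hstep; split <;> norm_num

lemma hstep_cases (x : ℝ) : hstep x = 1 ∨ hstep x = -1 := by
  unfold hstep; split
  · exact Or.inl rfl
  · exact Or.inr rfl

lemma hstep_measurable : Measurable hstep := by
  unfold hstep
  exact Measurable.ite measurableSet_Iic measurable_const measurable_const

lemma hstep_abs_le (x : ℝ) : |hstep x| ≤ 1 := by
  unfold hstep; split <;> norm_num

lemma hstep_integrable : IntegrableOn hstep (Icc (0:ℝ) 1) := by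
  refine (integrable_const (1:ℝ)).mono' (hstep_measurable.aestronglyMeasurable) ?_
  exact Filter.Eventually.of_forall fun x => by simpa using hstep_abs_le x

lemma hstep_integral : ∫ x in Icc (0:ℝ) 1, hstep x = 0 := by
  have A : ∫ x in Ioc (0:ℝ) (1/2), hstep x = 1/2 := by
    rw [MeasureTheory.setIntegral_congr_fun measurableSet_Ioc
      (g := fun _ => (1:ℝ)) (fun x hx => by unfold hstep; rw [if_pos hx.2])]
    simp [Real.volume_Ioc]
  have B : ∫ x in Ioc (1/2:ℝ) 1, hstep x = -(1/2) := by
    rw [MeasureTheory.setIntegral_congr_fun measurableSet_Ioc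
      (g := fun _ => (-1:ℝ)) (fun x hx => by unfold hstep; rw [if_neg (not_le.mpr hx.1)])]
    simp [Real.volume_Ioc]
    norm_num
  rw [MeasureTheory.integral_Icc_eq_integral_Ioc,
    show Ioc (0:ℝ) 1 = Ioc (0:ℝ) (1/2) ∪ Ioc (1/2) 1 by
      rw [Set.Ioc_union_Ioc_eq_Ioc] <;> norm_num]
  rw [MeasureTheory.setIntegral_union (Set.Ioc_disjoint_Ioc_of_le le_rfl) measurableSet_Ioc
    (hstep_integrable.mono_set (fun x hx => ⟨le_of_lt hx.1, hx.2.trans (by norm_num)⟩))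
    (hstep_integrable.mono_set (fun x hx => ⟨(lt_trans (by norm_num) hx.1).le, hx.2⟩)),
    A, B]
  norm_num

lemma intAB (A B : ℝ) : ∫ y in Icc (0:ℝ) 1, (A + B * hstep y) = A := by
  rw [MeasureTheory.integral_add (integrable_const A) (hstep_integrable.const_mul B),
    MeasureTheory.integral_const_mul, hstep_integral, setIntegral_const]
  simp [Real.volume_Icc]

/-- The bipodal block graphon with equal blocks, values `a ± s`. -/
def Gblock (a s : ℝ) (x y : ℝ) : ℝ := a + s * (hstep x * hstep y)

lemma Gblock_edge (a s : ℝ) : edgeDensity (Gblock a s) = a := by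
  unfold edgeDensity
  have h1 : ∀ x : ℝ, (∫ y in Icc (0:ℝ) 1, Gblock a s x y) = a := by
    intro x
    rw [show (fun y => Gblock a s x y) = fun y => a + (s * hstep x) * hstep y from
      funext fun y => by unfold Gblock; ring]
    exact intAB a _
  rw [MeasureTheory.setIntegral_congr_fun measurableSet_Icc (g := fun _ => a)
    (fun x _ => h1 x), setIntegral_const]
  simp [Real.volume_Icc]

lemma Gblock_tri (a s : ℝ) : triangleDensity (Gblock a s) = a^3 + s^3 := by
  unfold triangleDensity
  have h1 : ∀ x y : ℝ, (∫ z in Icc (0:ℝ) 1,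
      Gblock a s x y * Gblock a s y z * Gblock a s z x)
      = (a^3 + s^3) + ((a*s^2 + a^2*s) * hstep x) * hstep y := by
    intro x y
    rw [show (fun z => Gblock a s x y * Gblock a s y z * Gblock a s z x)
        = fun z => ((a^3 + s^3) + ((a*s^2 + a^2*s) * hstep x) * hstep y)
            + ((a + s*(hstep x*hstep y)) * (a*s*(hstep x + hstep y))) * hstep z from
      funext fun z => by
        unfold Gblock
        linear_combination (a + s*(hstep x*hstep y)) * s^2 * hstep x * hstep y * (hstep_sq z)
          + s^3 * hstep x * hstep x * (hstep_sq y) + s^3 * (hstep_sq x)]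
    exact intAB _ _
  have h2 : ∀ x : ℝ, (∫ y in Icc (0:ℝ) 1, ∫ z in Icc (0:ℝ) 1,
      Gblock a s x y * Gblock a s y z * Gblock a s z x) = a^3 + s^3 := by
    intro x
    rw [MeasureTheory.setIntegral_congr_fun measurableSet_Icc
      (g := fun y => (a^3 + s^3) + ((a*s^2 + a^2*s) * hstep x) * hstep y)
      (fun y _ => h1 x y)]
    exact intAB _ _
  rw [MeasureTheory.setIntegral_congr_fun measurableSet_Icc (g := fun _ => a^3 + s^3)
    (fun x _ => h2 x), setIntegral_const]
  simp [Real.volume_Icc]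

lemma Gblock_isGraphon (a s : ℝ) (h1 : |s| ≤ a) (h2 : a + |s| ≤ 1) :
    IsGraphon (Gblock a s) := by
  have hs1 := le_abs_self s
  have hs2 := neg_abs_le s
  refine ⟨?_, ?_, ?_⟩
  · have heq : Function.uncurry (Gblock a s)
        = fun p : ℝ × ℝ => a + s * (hstep p.1 * hstep p.2) := rfl
    rw [heq]
    exact measurable_const.add
      (((hstep_measurable.comp measurable_fst).mul
        (hstep_measurable.comp measurable_snd)).const_mul s)
  · intro x y; unfold Gblock; ring
  · intro x y
    unfold Gblock
    rcases hstep_cases x with hx | hx <;> rcases hstep_cases y with hy | hy <;>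
      rw [hx, hy] <;> constructor <;>
      simp only [mul_one, mul_neg, mul_neg_one, neg_neg, one_mul, neg_one_mul] <;>
      linarith

lemma hasDerivAt_I0 (u : ℝ) (h0 : 0 < u) (h1 : u < 1) : HasDerivAt I0 (I0d u) u := by
  have A := Real.hasDerivAt_mul_log h0.ne'
  have hu : (1:ℝ) - u ≠ 0 := ne_of_gt (by linarith)
  have D : HasDerivAt (fun v : ℝ => 1 - v) (-1) u := by
    exact (hasDerivAt_id u).const_sub 1
  have B : HasDerivAt (fun v : ℝ => (1 - v) * Real.log (1 - v))
      ((Real.log (1 - u) + 1) * (-1)) u := (Real.hasDerivAt_mul_log hu).comp u D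
  have := (A.add B).div_const 2
  refine this.congr_deriv ?_
  unfold I0d; ring

lemma I0_strong (x : ℝ) (hx0 : 0 < x) (hx1 : x < 1/2) (c : ℝ) (hc0 : 0 ≤ c) (hc : c ≤ x/2) :
    2 * I0 x + c^2/4 ≤ I0 (x - c) + I0 (x + c) := by
  set ψ : ℝ → ℝ := fun b => I0 (x + b) + I0 (x - b) - b^2/4 with hψ
  have hder : ∀ b ∈ Icc (0:ℝ) (x/2), HasDerivAt ψ (I0d (x + b) - I0d (x - b) - b/2) b := by
    intro b hb
    have hb0 : 0 ≤ b := hb.1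
    have hb1 : b ≤ x/2 := hb.2
    have h1 : HasDerivAt (fun b : ℝ => I0 (x + b)) (I0d (x + b)) b := by
      have := (hasDerivAt_I0 (x + b) (by linarith) (by linarith)).comp b
        ((hasDerivAt_const b x).add (hasDerivAt_id b))
      exact this.congr_deriv (by simp)
    have h2 : HasDerivAt (fun b : ℝ => I0 (x - b)) (-(I0d (x - b))) b := by
      have := (hasDerivAt_I0 (x - b) (by linarith) (by linarith)).comp b
        ((hasDerivAt_const b x).sub (hasDerivAt_id b))
      exact this.congr_deriv (by simp)
    have h3 : HasDerivAt (fun b : ℝ => b^2/4) (b/2) b := by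
      have := (hasDerivAt_pow 2 b).div_const 4
      refine this.congr_deriv ?_
      ring
    exact ((h1.add h2).sub h3).congr_deriv (by ring)
  have hmono : MonotoneOn ψ (Icc 0 (x/2)) := by
    apply monotoneOn_of_deriv_nonneg (convex_Icc _ _)
    · exact fun b hb => ((hder b hb).continuousAt).continuousWithinAt
    · intro b hb
      rw [interior_Icc] at hb
      exact ((hder b (Ioo_subset_Icc_self hb)).differentiableAt).differentiableWithinAt
    · intro b hb
      rw [interior_Icc] at hb
      rw [(hder b (Ioo_subset_Icc_self hb)).deriv]
      have hb0 : 0 < b := hb.1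
      have hb1 : b < x/2 := hb.2
      have hxb : 0 < x - b := by linarith
      have hxb2 : 0 < x + b := by linarith
      have l1 : Real.log ((x - b)/(x + b)) ≤ (x - b)/(x + b) - 1 :=
        Real.log_le_sub_one_of_pos (by positivity)
      rw [Real.log_div hxb.ne' hxb2.ne'] at l1
      have l2 : (x - b)/(x + b) - 1 = -(2*b)/(x+b) := by
        field_simp
        ring
      have l3 : (2*b)/(x+b) ≥ 2*b := by
        rw [ge_iff_le, le_div_iff₀ hxb2]
        nlinarith
      have l4 : Real.log (x + b) - Real.log (x - b) ≥ 2*b := by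
        rw [l2] at l1
        have : -(2*b)/(x+b) ≤ -(2*b) := by
          rw [neg_div]
          linarith
        linarith
      have l5 : Real.log (1 - x - b) ≤ Real.log (1 - x + b) :=
        Real.log_le_log (by linarith) (by linarith)
      unfold I0d
      have e1 : (1 : ℝ) - (x + b) = 1 - x - b := by ring
      have e2 : (1 : ℝ) - (x - b) = 1 - x + b := by ring
      rw [e1, e2]
      linarith
  have h0 : (0:ℝ) ∈ Icc (0:ℝ) (x/2) := ⟨le_refl 0, by linarith⟩
  have hcI : c ∈ Icc (0:ℝ) (x/2) := ⟨hc0, hc⟩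
  have hm := hmono h0 hcI hc0
  rw [hψ] at hm
  simp only at hm
  have hψ0 : I0 (x + 0) + I0 (x - 0) - 0^2/4 = 2 * I0 x := by norm_num; ring
  rw [hψ0] at hm
  linarith

lemma cube_le_self {c : ℝ} (h0 : 0 ≤ c) (h1 : c ≤ 1) : c^3 ≤ c := by
  nlinarith [mul_nonneg (mul_nonneg h0 h0) (sub_nonneg.mpr h1),
    mul_nonneg h0 (sub_nonneg.mpr h1)]

lemma exists_cbrt (d c : ℝ) (hc : 0 ≤ c) (hd : |d| ≤ c^3) : ∃ s : ℝ, |s| ≤ c ∧ s^3 = d := by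
  have hcont : ContinuousOn (fun s : ℝ => s^3) (Icc (-c) c) := (continuous_pow 3).continuousOn
  have hmem : d ∈ Icc ((-c)^3) (c^3) := by
    rw [abs_le] at hd
    constructor
    · have he : (-c)^3 = -(c^3) := by ring
      rw [he]; linarith [hd.1]
    · exact hd.2
  obtain ⟨s, hs, hs3⟩ := intermediate_value_Icc (by linarith : -c ≤ c) hcont hmem
  exact ⟨s, abs_le.mpr ⟨hs.1, hs.2⟩, hs3⟩

end AuxForProof

/-- if the perturbative formula
    `S(e, e³−(e−ε)³) = −(1/2)[I₀(ε)+I₀(2e−ε)]` holds for all small `ε` and all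
    `ε < e < (1+ε)/2`, then `S` fails to be real-analytic at some interior
    point of `R`. -/



theorem transition_between_scallops
    (hyp : ∃ ε₀ : ℝ, 0 < ε₀ ∧ ε₀ < 1 ∧ ∀ ε : ℝ, 0 < ε → ε < ε₀ →
      ∀ e : ℝ, ε < e → e < (1 + ε) / 2 →
        entropy e (e ^ 3 - (e - ε) ^ 3) = -(I0 ε + I0 (2 * e - ε)) / 2) :
    ∃ q : ℝ × ℝ, q ∈ interior Rset ∧
      ¬∃ (f : ℝ × ℝ → ℝ) (U : Set (ℝ × ℝ)), IsOpen U ∧ q ∈ U ∧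
        (∀ x ∈ U, AnalyticAt ℝ f x) ∧ ∀ x ∈ U, f x = entropy x.1 x.2 := by
  classical
  obtain ⟨ε₀, hε₀0, hε₀1, hfor⟩ := hyp
  set E : ℝ := ε₀ / 2 with hEdef
  have hE0 : 0 < E := by positivity
  have hE2 : E < 1/2 := by rw [hEdef]; linarith
  set T : ℝ := E ^ 3 with hTdef
  refine ⟨(E, T), ?_, ?_⟩
  · -- interior point
    set V : Set (ℝ × ℝ) := {p | |p.1 - E| < E/4} ∩ {p | |p.2 - p.1^3| < (E/4)^3} with hVdef
    have hVopen : IsOpen V := by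
      apply IsOpen.inter
      · exact isOpen_lt ((continuous_fst.sub continuous_const).abs) continuous_const
      · exact isOpen_lt ((continuous_snd.sub (continuous_fst.pow 3)).abs) continuous_const
    have hqV : (E, T) ∈ V := by
      constructor
      · show |E - E| < E/4
        rw [sub_self, abs_zero]; positivity
      · show |T - E^3| < (E/4)^3
        have hz : T - E^3 = 0 := by rw [hTdef]; exact sub_self _
        rw [hz, abs_zero]; positivity
    have hVR : V ⊆ Rset := by
      rintro ⟨e, t⟩ ⟨he, ht⟩
      have he' : |e - E| < E/4 := he
      have ht' : |t - e^3| < (E/4)^3 := ht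
      obtain ⟨s, hs1, hs2⟩ := exists_cbrt (t - e^3) (E/4) (by positivity) (le_of_lt ht')
      rw [abs_lt] at he'
      have habs := abs_le.mp hs1
      have hE4 : (0:ℝ) < E/4 := by positivity
      have hsa : |s| ≤ e := le_trans hs1 (by linarith [he'.1])
      have hsb : e + |s| ≤ 1 := by
        have h3 : e + |s| ≤ (E + E/4) + E/4 := by linarith [he'.2]
        linarith
      refine ⟨Gblock e s, Gblock_isGraphon e s hsa hsb, ?_, ?_⟩
      · exact Gblock_edge e s
      · show triangleDensity (Gblock e s) = t
        rw [Gblock_tri]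
        linarith [hs2]
    exact interior_maximal hVR hVopen hqV
  · -- non-analyticity
    rintro ⟨f, U, hUopen, hqU, hfa, hfeq⟩
    set φ : ℝ → ℝ := fun t => f (E, t) with hφdef
    have hφa : AnalyticAt ℝ φ T := by
      have hinner : AnalyticAt ℝ (fun t : ℝ => ((E, t) : ℝ × ℝ)) T :=
        analyticAt_const.prod analyticAt_id
      exact (hfa (E, T) hqU).comp hinner
    have hφd : DifferentiableAt ℝ φ T := hφa.differentiableAt
    obtain ⟨C, hC⟩ := Asymptotics.isBigO_iff.mp (hφd.hasFDerivAt.isBigO_sub)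
    rw [Metric.eventually_nhds_iff] at hC
    obtain ⟨r, hr0, hCr⟩ := hC
    set C' : ℝ := max C 1 with hC'def
    have hC'1 : (1:ℝ) ≤ C' := le_max_right _ _
    have hC'0 : (0:ℝ) < C' := lt_of_lt_of_le one_pos hC'1
    have hCC' : C ≤ C' := le_max_left _ _
    obtain ⟨rU, hrU0, hball⟩ := Metric.isOpen_iff.mp hUopen (E, T) hqU
    -- the formula for φ to the left of T
    have hform : ∀ c : ℝ, 0 < c → c ≤ E/2 → c < rU →
        φ (T - c^3) = -(I0 (E - c) + I0 (E + c)) / 2 := by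
      intro c hc0 hc1 hc2
      have hcE : c < 1 := by linarith
      have hc3 : c^3 < rU :=
        lt_of_le_of_lt (cube_le_self hc0.le hcE.le) hc2
      have hmem : ((E, T - c^3) : ℝ × ℝ) ∈ U := by
        apply hball
        rw [Metric.mem_ball, Prod.dist_eq]
        simp only [Real.dist_eq]
        rw [show E - E = 0 by ring, show T - c^3 - T = -(c^3) by ring]
        rw [abs_neg, abs_zero, abs_of_pos (by positivity : (0:ℝ) < c^3)]
        rw [max_lt_iff]
        exact ⟨hrU0, hc3⟩
      have hfeq' : f (E, T - c^3) = entropy E (T - c^3) := hfeq _ hmem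
      have hEε : E < ε₀ := by rw [hEdef]; linarith
      have happ := hfor (E - c) (by linarith) (by linarith)
        E (by linarith) (by linarith)
      have e1 : E ^ 3 - (E - (E - c)) ^ 3 = T - c^3 := by rw [hTdef]; ring
      have e2 : 2 * E - (E - c) = E + c := by ring
      rw [e1, e2] at happ
      show f (E, T - c^3) = -(I0 (E - c) + I0 (E + c)) / 2
      rw [hfeq']
      exact happ
    -- Lipschitz-type bound near T
    have hlip : ∀ c : ℝ, 0 < c → c ≤ 1/2 → c < r → |φ (T - c^3) - φ T| ≤ C' * c^3 := by
      intro c hc0 hchalf hcr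
      have hc3 : c^3 ≤ c := cube_le_self hc0.le (by linarith)
      have hdist : dist (T - c^3) T < r := by
        rw [Real.dist_eq, show T - c^3 - T = -(c^3) by ring, abs_neg,
          abs_of_pos (by positivity : (0:ℝ) < c^3)]
        linarith
      have hb := hCr hdist
      rw [Real.norm_eq_abs, Real.norm_eq_abs, show T - c^3 - T = -(c^3) by ring, abs_neg,
        abs_of_pos (by positivity : (0:ℝ) < c^3)] at hb
      calc |φ (T - c^3) - φ T| ≤ C * c^3 := hb
        _ ≤ C' * c^3 := by nlinarith [pow_pos hc0 3]
    -- choice of the main scale c₁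
    set c₁ : ℝ := min (min (E/2) (1/2)) (min (min (rU/2) (r/2)) (1/(16*C'))) with hc₁def
    have hc₁0 : 0 < c₁ := by
      apply lt_min (lt_min (by positivity) (by norm_num))
      exact lt_min (lt_min (by positivity) (by positivity)) (by positivity)
    have hc₁E : c₁ ≤ E/2 := le_trans (min_le_left _ _) (min_le_left _ _)
    have hc₁half : c₁ ≤ 1/2 := le_trans (min_le_left _ _) (min_le_right _ _)
    have hc₁rU : c₁ < rU :=
      lt_of_le_of_lt (le_trans (min_le_right _ _) (le_trans (min_le_left _ _) (min_le_left _ _)))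
        (by linarith)
    have hc₁r : c₁ < r :=
      lt_of_le_of_lt (le_trans (min_le_right _ _) (le_trans (min_le_left _ _) (min_le_right _ _)))
        (by linarith)
    have hc₁C : c₁ ≤ 1/(16*C') := le_trans (min_le_right _ _) (min_le_right _ _)
    -- upper bound on φ T
    have hub : φ T ≤ -(I0 E) - c₁^2/16 := by
      have hf := hform c₁ hc₁0 hc₁E hc₁rU
      have hs := I0_strong E hE0 hE2 c₁ hc₁0.le hc₁E
      have hl := abs_le.mp (hlip c₁ hc₁0 hc₁half hc₁r)
      have hCc : C' * c₁ ≤ 1/16 := by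
        rw [le_div_iff₀ (by positivity : (0:ℝ) < 16*C')] at hc₁C
        nlinarith
      have hstep1 : φ (T - c₁^3) ≤ -(I0 E) - c₁^2/8 := by
        rw [hf]; linarith
      have hstep2 : C' * c₁^3 ≤ c₁^2/16 := by nlinarith [sq_nonneg c₁]
      linarith [hl.1]
    -- lower bound on φ T via continuity of I0 at E
    have hIE : ContinuousAt I0 E := (hasDerivAt_I0 E hE0 (by linarith)).continuousAt
    have hg : Filter.Tendsto (fun c : ℝ => I0 (E - c) + I0 (E + c)) (nhds 0)
        (nhds (2 * I0 E)) := by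
      have h1 : Filter.Tendsto (fun c : ℝ => E - c) (nhds 0) (nhds E) :=
        Continuous.tendsto' (by fun_prop) 0 E (by norm_num)
      have h2 : Filter.Tendsto (fun c : ℝ => E + c) (nhds 0) (nhds E) :=
        Continuous.tendsto' (by fun_prop) 0 E (by norm_num)
      have := (hIE.tendsto.comp h1).add (hIE.tendsto.comp h2)
      rw [two_mul]
      exact this
    set δ : ℝ := c₁^2/64 with hδdef
    have hδ0 : 0 < δ := by positivity
    have hev1 : ∀ᶠ c in nhds (0:ℝ), |(I0 (E - c) + I0 (E + c)) - 2 * I0 E| < δ := by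
      have := Metric.tendsto_nhds.mp hg δ hδ0
      simpa [Real.dist_eq] using this
    have hev2 : ∀ᶠ c in nhds (0:ℝ), |c| < min c₁ (δ/C') := by
      rw [Metric.eventually_nhds_iff]
      refine ⟨min c₁ (δ/C'), lt_min hc₁0 (by positivity), fun y hy => ?_⟩
      simpa [Real.dist_eq] using hy
    have hev3 : ∀ᶠ c in nhdsWithin (0:ℝ) (Set.Ioi 0),
        |(I0 (E - c) + I0 (E + c)) - 2 * I0 E| < δ ∧ |c| < min c₁ (δ/C') :=
      (hev1.and hev2).filter_mono nhdsWithin_le_nhds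
    have hev4 : ∀ᶠ c in nhdsWithin (0:ℝ) (Set.Ioi 0), c ∈ Set.Ioi (0:ℝ) :=
      self_mem_nhdsWithin
    obtain ⟨c₂, ⟨hg2, hsm2⟩, hc₂pos⟩ := (hev3.and hev4).exists
    have hc₂0 : 0 < c₂ := hc₂pos
    rw [abs_of_pos hc₂0, lt_min_iff] at hsm2
    have hc₂c₁ : c₂ < c₁ := hsm2.1
    have hc₂δ : c₂ < δ/C' := hsm2.2
    have hf2 := hform c₂ hc₂0 (by linarith) (by linarith)
    have hl2 := abs_le.mp (hlip c₂ hc₂0 (by linarith) (by linarith))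
    have hg2' := abs_lt.mp hg2
    have hCc₂ : C' * c₂^3 ≤ δ := by
      have h31 : c₂^3 ≤ c₂ := cube_le_self hc₂0.le (by linarith)
      have h32 : C' * c₂ < δ := by
        rw [lt_div_iff₀ hC'0] at hc₂δ
        linarith
      calc C' * c₂^3 ≤ C' * c₂ := mul_le_mul_of_nonneg_left h31 hC'0.le
        _ ≤ δ := h32.le
    have hlb : -(I0 E) - 2*δ ≤ φ T := by
      have hφ2 : φ (T - c₂^3) ≥ -(I0 E) - δ/2 := by
        rw [hf2]
        linarith [hg2'.2]
      linarith [hl2.2]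
    rw [hδdef] at hlb
    linarith [pow_pos hc₁0 2]
end

section
/- Let g be a graphon with t(g) = 0. Then the two-dimensional Lebesgue measure of the set { (x,y) ∈ [0,1]² : g(x,y) = 0 } is at least 1/2. -/
open MeasureTheory Real Set Filter

namespace ZSAux

noncomputable def mu : Measure ℝ := volume.restrict (Icc (0 : ℝ) 1)

lemma mu_univ : mu Set.univ = 1 := by
  simp [mu, Real.volume_Icc]

instance : SFinite mu := by unfold mu; infer_instance

instance : IsProbabilityMeasure mu := ⟨mu_univ⟩

lemma integrable_of_bounded {f : ℝ → ℝ} (hf : AEStronglyMeasurable f mu)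
    (h0 : ∀ x, 0 ≤ f x) (hb : ∀ x, f x ≤ 1) : Integrable f mu := by
  refine (integrable_const (1 : ℝ)).mono' hf (ae_of_all _ fun x => ?_)
  rw [Real.norm_eq_abs, abs_of_nonneg (h0 x)]
  exact hb x

lemma integral_le_one {f : ℝ → ℝ} (hf : AEStronglyMeasurable f mu)
    (h0 : ∀ x, 0 ≤ f x) (hb : ∀ x, f x ≤ 1) : ∫ x, f x ∂mu ≤ 1 := by
  calc ∫ x, f x ∂mu ≤ ∫ _, (1 : ℝ) ∂mu :=
        integral_mono (integrable_of_bounded hf h0 hb) (integrable_const 1) hb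
    _ = 1 := by simp [mu_univ]

lemma integral_nonneg' {f : ℝ → ℝ} (h0 : ∀ x, 0 ≤ f x) : 0 ≤ ∫ x, f x ∂mu :=
  integral_nonneg h0

lemma ae_zero_of_integral_zero {f : ℝ → ℝ} (hf : AEStronglyMeasurable f mu)
    (h0 : ∀ x, 0 ≤ f x) (hb : ∀ x, f x ≤ 1) (h : ∫ x, f x ∂mu = 0) :
    ∀ᵐ x ∂mu, f x = 0 :=
  (integral_eq_zero_iff_of_nonneg h0 (integrable_of_bounded hf h0 hb)).mp h

end ZSAux

/-- a triangle-free graphon vanishes on a subset of `[0,1]²` of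
    measure at least `1/2`. -/
theorem zero_set_of_triangle_free (g : ℝ → ℝ → ℝ) (hg : IsGraphon g)
    (hgt : triangleDensity g = 0) :
    (1 / 2 : ENNReal) ≤
      volume {q : ℝ × ℝ | q ∈ Icc (0 : ℝ) 1 ×ˢ Icc (0 : ℝ) 1 ∧ g q.1 q.2 = 0} := by
  classical
  obtain ⟨hgm, hsym, hrange⟩ := hg
  set μ := ZSAux.mu with hμdef
  -- basic measurability / bounds
  have hg0 : ∀ x y, 0 ≤ g x y := fun x y => (hrange x y).1
  have hg1 : ∀ x y, g x y ≤ 1 := fun x y => (hrange x y).2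
  have hsec1 : ∀ x, Measurable (g x) := fun x =>
    hgm.comp (measurable_const.prodMk measurable_id)
  have hp0 : ∀ x y z, 0 ≤ g x y * g y z * g z x := fun x y z =>
    mul_nonneg (mul_nonneg (hg0 _ _) (hg0 _ _)) (hg0 _ _)
  have hp1 : ∀ x y z, g x y * g y z * g z x ≤ 1 := fun x y z =>
    mul_le_one₀ (mul_le_one₀ (hg1 x y) (hg0 y z) (hg1 y z)) (hg0 z x) (hg1 z x)
  have hsec2 : ∀ y, Measurable (fun x => g x y) := by
    intro y
    have : (fun x => g x y) = g y := funext fun x => hsym x y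
    rw [this]; exact hsec1 y
  -- measurability of the triangle integrand
  have hpm : Measurable (fun p : (ℝ × ℝ) × ℝ => g p.1.1 p.1.2 * g p.1.2 p.2 * g p.2 p.1.1) := by
    refine Measurable.mul (Measurable.mul ?_ ?_) ?_
    · exact hgm.comp (measurable_fst.fst.prodMk measurable_fst.snd)
    · exact hgm.comp (measurable_fst.snd.prodMk measurable_snd)
    · exact hgm.comp (measurable_snd.prodMk measurable_fst.fst)
  set F2 : ℝ × ℝ → ℝ := fun q => ∫ z, g q.1 q.2 * g q.2 z * g z q.1 ∂μ with hF2def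
  have hF2sm : StronglyMeasurable F2 := hpm.stronglyMeasurable.integral_prod_right'
  have hinnm : ∀ x y, Measurable (fun z => g x y * g y z * g z x) := fun x y =>
    ((measurable_const.mul (hsec1 y)).mul (hsec2 x))
  have hF20 : ∀ q, 0 ≤ F2 q := fun q => integral_nonneg fun z => hp0 _ _ _
  have hF21 : ∀ q, F2 q ≤ 1 := fun q =>
    ZSAux.integral_le_one (hinnm q.1 q.2).aestronglyMeasurable (fun z => hp0 _ _ _)
      (fun z => hp1 _ _ _)
  set F1 : ℝ → ℝ := fun x => ∫ y, F2 (x, y) ∂μ with hF1def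
  have hF1sm : StronglyMeasurable F1 := hF2sm.integral_prod_right'
  have hF2xsm : ∀ x, AEStronglyMeasurable (fun y => F2 (x, y)) μ := fun x =>
    (hF2sm.comp_measurable measurable_prodMk_left).aestronglyMeasurable
  have hF10 : ∀ x, 0 ≤ F1 x := fun x => integral_nonneg fun y => hF20 _
  have hF11 : ∀ x, F1 x ≤ 1 := fun x =>
    ZSAux.integral_le_one (hF2xsm x) (fun y => hF20 _) (fun y => hF21 _)
  have htri : ∫ x, F1 x ∂μ = 0 := hgt
  have hae1 : ∀ᵐ x ∂μ, F1 x = 0 :=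
    ZSAux.ae_zero_of_integral_zero hF1sm.aestronglyMeasurable hF10 hF11 htri
  have hae2 : ∀ᵐ x ∂μ, ∀ᵐ y ∂μ, F2 (x, y) = 0 := by
    filter_upwards [hae1] with x hx
    exact ZSAux.ae_zero_of_integral_zero (hF2xsm x) (fun y => hF20 _) (fun y => hF21 _) hx
  have hae3 : ∀ᵐ x ∂μ, ∀ᵐ y ∂μ, ∀ᵐ z ∂μ, g x y * g y z * g z x = 0 := by
    filter_upwards [hae2] with x hx
    filter_upwards [hx] with y hy
    exact ZSAux.ae_zero_of_integral_zero (hinnm x y).aestronglyMeasurable (hp0 x y)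
      (hp1 x y) hy
  -- neighborhoods
  set s : Set (ℝ × ℝ) := {p | g p.1 p.2 ≠ 0} with hsdef
  have hs : MeasurableSet s := hgm (measurableSet_singleton (0:ℝ)).compl
  have hsecset : ∀ x, MeasurableSet {y | g x y ≠ 0} := fun x =>
    (hsec1 x) (measurableSet_singleton (0:ℝ)).compl
  set N : ℝ → ENNReal := fun x => μ {y | g x y ≠ 0} with hNdef
  have hNmeas : Measurable N := measurable_measure_prodMk_left hs
  have hN1 : ∀ x, N x ≤ 1 :=
    fun x => le_trans (measure_mono (subset_univ _)) ZSAux.mu_univ.le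
  have hNB : ∀ᵐ x ∂μ, ∀ᵐ y ∂μ, g x y ≠ 0 → N x + N y ≤ 1 := by
    filter_upwards [hae3] with x hx
    filter_upwards [hx] with y hy
    intro hxy
    have hnull : μ ({z | g x z ≠ 0} ∩ {z | g y z ≠ 0}) = 0 := by
      refine measure_mono_null ?_ (ae_iff.mp hy)
      rintro z ⟨h1, h2⟩
      simp only [mem_setOf_eq] at h1 h2 ⊢
      exact mul_ne_zero (mul_ne_zero hxy h2) (by rwa [hsym z x])
    calc N x + N y
        = μ ({z | g x z ≠ 0} ∪ {z | g y z ≠ 0}) + μ ({z | g x z ≠ 0} ∩ {z | g y z ≠ 0}) :=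
          (measure_union_add_inter _ (hsecset y)).symm
      _ = μ ({z | g x z ≠ 0} ∪ {z | g y z ≠ 0}) := by rw [hnull, add_zero]
      _ ≤ 1 := le_trans (measure_mono (subset_univ _)) ZSAux.mu_univ.le
  -- indicator of the support
  set H : ℝ → ℝ → ENNReal := fun x y => if g x y = 0 then 0 else 1 with hHdef
  have hHind : ∀ x, (fun y => H x y) = ({y | g x y ≠ 0}).indicator (fun _ => 1) := by
    intro x; funext y
    by_cases h : g x y = 0 <;> simp [hHdef, h, Set.indicator_apply]
  have hHm : ∀ x, Measurable (H x) := by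
    intro x
    have : H x = ({y | g x y ≠ 0}).indicator (fun _ => 1) := hHind x
    rw [this]
    exact measurable_const.indicator (hsecset x)
  have hHint : ∀ x, ∫⁻ y, H x y ∂μ = N x := by
    intro x
    rw [show (fun y => H x y) = ({y | g x y ≠ 0}).indicator (fun _ => 1) from hHind x,
      lintegral_indicator (hsecset x), setLIntegral_one]
  have hHsymm : ∀ x y, H x y = H y x := by
    intro x y; simp only [hHdef, hsym x y]
  have hHunc : Measurable (Function.uncurry H) := by
    have : Function.uncurry H = s.indicator (fun _ => 1) := by
      funext p
      by_cases h : g p.1 p.2 = 0 <;>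
        simp [Function.uncurry, hHdef, h, Set.indicator_apply, hsdef]
    rw [this]
    exact measurable_const.indicator hs
  set a : ENNReal := ∫⁻ x, N x ∂μ with hadef
  set b : ENNReal := ∫⁻ x, N x * N x ∂μ with hbdef
  have t2 : ∫⁻ x, ∫⁻ y, H x y * N y ∂μ ∂μ = b := by
    rw [lintegral_lintegral_swap ((hHunc.mul (hNmeas.comp measurable_snd)).aemeasurable)]
    refine lintegral_congr fun y => ?_
    have e : ∫⁻ x, H x y * N y ∂μ = ∫⁻ x, H y x * N y ∂μ :=
      lintegral_congr fun x => by rw [hHsymm]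
    rw [e, lintegral_mul_const (N y) (hHm y), hHint y]
  have hsumle : b + b ≤ a := by
    have e1 : ∫⁻ x, ∫⁻ y, (H x y * N x + H x y * N y) ∂μ ∂μ = b + b := by
      have inner : ∀ x, ∫⁻ y, (H x y * N x + H x y * N y) ∂μ
          = N x * N x + ∫⁻ y, H x y * N y ∂μ := by
        intro x
        rw [lintegral_add_left (f := fun y => H x y * N x) ((hHm x).mul measurable_const),
          lintegral_mul_const (N x) (hHm x), hHint x]
      rw [lintegral_congr inner,
        lintegral_add_left (f := fun a => N a * N a) (hNmeas.mul hNmeas), t2]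
    have e2 : ∫⁻ x, ∫⁻ y, (H x y * N x + H x y * N y) ∂μ ∂μ
        ≤ ∫⁻ x, ∫⁻ y, H x y ∂μ ∂μ := by
      refine lintegral_mono_ae ?_
      filter_upwards [hNB] with x hx
      refine lintegral_mono_ae ?_
      filter_upwards [hx] with y hy
      by_cases h : g x y = 0
      · simp [hHdef, h]
      · simpa [hHdef, h] using hy h
    have e3 : ∫⁻ x, ∫⁻ y, H x y ∂μ ∂μ = a := lintegral_congr hHint
    calc b + b = _ := e1.symm
      _ ≤ _ := e2
      _ = a := e3
  have hsq : ∀ c : ENNReal, c ^ (2:ℝ) = c * c := by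
    intro c
    rw [show (2:ℝ) = ((2:ℕ):ℝ) by norm_num, ENNReal.rpow_natCast, sq]
  have hCS : a * a ≤ b := by
    have h22 : Real.HolderConjugate 2 2 := ⟨by norm_num, by norm_num, by norm_num⟩
    have hH := ENNReal.lintegral_mul_le_Lp_mul_Lq μ h22 hNmeas.aemeasurable
      (aemeasurable_const (b := (1:ENNReal)))
    simp only [Pi.mul_apply, mul_one, ENNReal.one_rpow, lintegral_one, hμdef,
      ZSAux.mu_univ, ENNReal.one_rpow, mul_one] at hH
    have hb2 : ∫⁻ x, N x ^ (2:ℝ) ∂μ = b := lintegral_congr fun x => hsq (N x)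
    rw [hb2] at hH
    have : a * a ≤ b ^ ((1:ℝ)/2) * b ^ ((1:ℝ)/2) := mul_le_mul' hH hH
    calc a * a ≤ b ^ ((1:ℝ)/2) * b ^ ((1:ℝ)/2) := this
      _ = b ^ ((1:ℝ)/2 + 1/2) := (ENNReal.rpow_add_of_nonneg _ _ (by norm_num) (by norm_num)).symm
      _ = b := by norm_num
  have ha1 : a ≤ 1 := by
    calc a ≤ ∫⁻ _, (1:ENNReal) ∂μ := lintegral_mono hN1
      _ = 1 := by rw [lintegral_one, ZSAux.mu_univ]
  have ha12 : a ≤ 1/2 := by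
    rcases eq_or_ne a 0 with h0 | h0
    · simp [h0]
    · have hatop : a ≠ ⊤ := ne_top_of_le_ne_top ENNReal.one_ne_top ha1
      have key : a * (2 * a) ≤ a * 1 := by
        have : a * a + a * a ≤ a := le_trans (add_le_add hCS hCS) hsumle
        calc a * (2 * a) = a * a + a * a := by ring
          _ ≤ a := this
          _ = a * 1 := (mul_one a).symm
      have h2a : 2 * a ≤ 1 := (ENNReal.mul_le_mul_iff_right h0 hatop).mp key
      rw [ENNReal.le_div_iff_mul_le (Or.inl (by norm_num)) (Or.inl (by norm_num)), mul_comm]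
      exact h2a
  -- conclusion
  haveI hPμ : IsProbabilityMeasure μ := hμdef ▸ (inferInstance : IsProbabilityMeasure ZSAux.mu)
  have hsc : MeasurableSet {q : ℝ × ℝ | g q.1 q.2 = 0} := hgm (measurableSet_singleton (0:ℝ))
  have hprod : (μ.prod μ) s = a := Measure.prod_apply hs
  have hcompl : (μ.prod μ) {q : ℝ × ℝ | g q.1 q.2 = 0} = 1 - a := by
    have hc : {q : ℝ × ℝ | g q.1 q.2 = 0} = sᶜ := by
      ext q; simp [hsdef]
    rw [hc, measure_compl hs (measure_ne_top _ _), hprod, measure_univ]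
  have hres : μ.prod μ = (volume : Measure (ℝ × ℝ)).restrict
      (Icc (0:ℝ) 1 ×ˢ Icc (0:ℝ) 1) := by
    rw [hμdef]
    unfold ZSAux.mu
    rw [Measure.prod_restrict, ← Measure.volume_eq_prod]
  have hvol : volume {q : ℝ × ℝ | q ∈ Icc (0 : ℝ) 1 ×ˢ Icc (0 : ℝ) 1 ∧ g q.1 q.2 = 0}
      = (μ.prod μ) {q : ℝ × ℝ | g q.1 q.2 = 0} := by
    rw [hres, Measure.restrict_apply hsc]
    congr 1
    ext q
    simp only [mem_inter_iff, mem_setOf_eq]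
    tauto
  rw [hvol, hcompl]
  calc (1/2 : ENNReal) = 1 - 1/2 := by norm_num
    _ ≤ 1 - a := tsub_le_tsub_left ha12 1
end

section
/- Let g be a graphon with e(g) = e such that the two-dimensional Lebesgue measure of { (x,y) ∈ [0,1]² : g(x,y) = 0 } is at least 1/2 (in particular e ≤ 1/2). Then I(g) ≥ I₀(2e)/2. -/
open MeasureTheory Real Set Filter

section Aux

lemma continuous_I0 : Continuous I0 := by
  unfold I0
  have h1 : Continuous fun u : ℝ => u * Real.log u := Real.continuous_mul_log
  have h2 : Continuous fun u : ℝ => (1 - u) * Real.log (1 - u) :=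
    h1.comp (continuous_const.sub continuous_id)
  exact (h1.add h2).div_const 2

lemma I0_zero : I0 0 = 0 := by simp [I0]

lemma convexOn_I0 : ConvexOn ℝ (Icc (0 : ℝ) 1) I0 := by
  have h1 : ConvexOn ℝ (Icc (0 : ℝ) 1) fun u : ℝ => u * Real.log u :=
    Real.convexOn_mul_log.subset (fun x hx => hx.1) (convex_Icc 0 1)
  have h2 : ConvexOn ℝ (Icc (0 : ℝ) 1) fun u : ℝ => (1 - u) * Real.log (1 - u) := by
    refine ⟨convex_Icc 0 1, fun x hx y hy a b ha hb hab => ?_⟩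
    have hx' : (1 : ℝ) - x ∈ Ici (0 : ℝ) := by simp [hx.2]
    have hy' : (1 : ℝ) - y ∈ Ici (0 : ℝ) := by simp [hy.2]
    have := Real.convexOn_mul_log.2 hx' hy' ha hb hab
    have hrw : a • (1 - x) + b • (1 - y) = 1 - (a • x + b • y) := by
      simp only [smul_eq_mul]; nlinarith
    rw [hrw] at this
    simpa using this
  have := (h1.add h2).smul (by norm_num : (0:ℝ) ≤ 1/2)
  convert this using 2 with u
  · rfl
  · rfl
  simp [I0, smul_eq_mul]; ring

lemma mul_log_mem {u : ℝ} (hu : u ∈ Icc (0 : ℝ) 1) :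
    u * Real.log u ∈ Icc (-1 : ℝ) 0 := by
  rcases eq_or_lt_of_le hu.1 with h | h
  · simp [← h]
  · constructor
    · have hlog : Real.log u⁻¹ ≤ u⁻¹ - 1 :=
        Real.log_le_sub_one_of_pos (by positivity)
      rw [Real.log_inv] at hlog
      have : -(u * Real.log u) ≤ u * (u⁻¹ - 1) := by
        have := mul_le_mul_of_nonneg_left hlog (le_of_lt h)
        nlinarith
      have hui : u * u⁻¹ = 1 := mul_inv_cancel₀ (ne_of_gt h)
      nlinarith
    · exact Real.mul_log_nonpos hu.1 hu.2

lemma I0_mem {u : ℝ} (hu : u ∈ Icc (0 : ℝ) 1) : I0 u ∈ Icc (-1 : ℝ) 0 := by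
  have h1 := mul_log_mem hu
  have h2 : (1 - u) * Real.log (1 - u) ∈ Icc (-1 : ℝ) 0 :=
    mul_log_mem ⟨by linarith [hu.2], by linarith [hu.1]⟩
  unfold I0
  constructor
  · nlinarith [h1.1, h2.1]
  · nlinarith [h1.2, h2.2]

end Aux

/-- if a graphon with edge density `e` vanishes on a set of
    measure at least `1/2`, then `I(g) ≥ I₀(2e)/2`. -/
theorem rate_lower_bound_of_large_zero_set (e : ℝ) (g : ℝ → ℝ → ℝ) (hg : IsGraphon g)
    (hge : edgeDensity g = e)
    (hzero : (1 / 2 : ENNReal) ≤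
      volume {q : ℝ × ℝ | q ∈ Icc (0 : ℝ) 1 ×ˢ Icc (0 : ℝ) 1 ∧ g q.1 q.2 = 0}) :
    rate g ≥ I0 (2 * e) / 2 := by
  obtain ⟨hmeas, hsymm, hmem⟩ := hg
  set Q : Set (ℝ × ℝ) := Icc (0 : ℝ) 1 ×ˢ Icc (0 : ℝ) 1 with hQdef
  set Z : Set (ℝ × ℝ) := {q : ℝ × ℝ | q ∈ Q ∧ g q.1 q.2 = 0} with hZdef
  set S : Set (ℝ × ℝ) := Q \ Z with hSdef
  have hQm : MeasurableSet Q := measurableSet_Icc.prod measurableSet_Icc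
  have hZm : MeasurableSet Z := by
    have : Z = Q ∩ Function.uncurry g ⁻¹' {0} := by
      ext q; simp [hZdef, Function.uncurry]
    rw [this]
    exact hQm.inter (hmeas (measurableSet_singleton 0))
  have hSm : MeasurableSet S := hQm.diff hZm
  have hQvol : volume Q = 1 := by
    rw [hQdef, Measure.volume_eq_prod, Measure.prod_prod]
    simp [Real.volume_Icc]
  have hZQ : Z ⊆ Q := fun q hq => hq.1
  have hZfin : volume Z ≠ ⊤ := by
    refine ne_of_lt (lt_of_le_of_lt (measure_mono hZQ) ?_)
    rw [hQvol]; exact ENNReal.one_lt_top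
  have hSvol : volume S ≤ 1 / 2 := by
    rw [hSdef, measure_diff hZQ hZm.nullMeasurableSet hZfin, hQvol]
    calc (1 : ENNReal) - volume Z ≤ 1 - 1/2 := tsub_le_tsub_left hzero 1
    _ = 1/2 := by norm_num [ENNReal.sub_half]
  have hSfin : volume S ≠ ⊤ := by
    refine ne_of_lt (lt_of_le_of_lt hSvol ?_)
    exact lt_of_le_of_lt ENNReal.half_le_self ENNReal.one_lt_top
  -- measurability and integrability
  have hGm : Measurable fun p : ℝ × ℝ => g p.1 p.2 := hmeas
  have hFm : Measurable fun p : ℝ × ℝ => I0 (g p.1 p.2) := continuous_I0.measurable.comp hGm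
  have hG_int : ∀ T : Set (ℝ × ℝ), MeasurableSet T → volume T ≠ ⊤ →
      Integrable (fun p : ℝ × ℝ => g p.1 p.2) (volume.restrict T) := by
    intro T hTm hTfin
    haveI : IsFiniteMeasure (volume.restrict T) :=
      ⟨by rw [Measure.restrict_apply_univ]; exact lt_of_le_of_ne le_top hTfin⟩
    refine ⟨hGm.aestronglyMeasurable, HasFiniteIntegral.of_bounded (C := 1) ?_⟩
    filter_upwards with p
    rw [Real.norm_eq_abs, abs_le]
    exact ⟨by linarith [(hmem p.1 p.2).1], (hmem p.1 p.2).2⟩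
  have hF_int : ∀ T : Set (ℝ × ℝ), MeasurableSet T → volume T ≠ ⊤ →
      Integrable (fun p : ℝ × ℝ => I0 (g p.1 p.2)) (volume.restrict T) := by
    intro T hTm hTfin
    haveI : IsFiniteMeasure (volume.restrict T) :=
      ⟨by rw [Measure.restrict_apply_univ]; exact lt_of_le_of_ne le_top hTfin⟩
    refine ⟨hFm.aestronglyMeasurable, HasFiniteIntegral.of_bounded (C := 1) ?_⟩
    filter_upwards with p
    rw [Real.norm_eq_abs, abs_le]
    have := I0_mem (hmem p.1 p.2)
    exact ⟨this.1, by linarith [this.2]⟩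
  have hQfin : volume Q ≠ ⊤ := by rw [hQvol]; exact ENNReal.one_ne_top
  -- rewrite iterated integrals as product integrals
  have hprodQ : (volume.restrict (Icc (0:ℝ) 1)).prod (volume.restrict (Icc (0:ℝ) 1)) =
      volume.restrict Q := by
    rw [hQdef, Measure.prod_restrict, ← Measure.volume_eq_prod]
  have hrate : rate g = ∫ p in Q, I0 (g p.1 p.2) := by
    rw [rate, ← hprodQ]
    exact integral_integral (by rw [hprodQ]; exact hF_int Q hQm hQfin)
  have hedge : edgeDensity g = ∫ p in Q, g p.1 p.2 := by
    rw [edgeDensity, ← hprodQ]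
    exact integral_integral (by rw [hprodQ]; exact hG_int Q hQm hQfin)
  -- split off the zero set
  have hsplitF : ∫ p in Q, I0 (g p.1 p.2) = ∫ p in S, I0 (g p.1 p.2) := by
    rw [← integral_inter_add_diff (s := Q) (t := Z) hZm (hF_int Q hQm hQfin),
      inter_eq_self_of_subset_right hZQ, ← hSdef,
      setIntegral_eq_zero_of_forall_eq_zero (fun q hq => by rw [hq.2, I0_zero]), zero_add]
  have hsplitG : ∫ p in Q, g p.1 p.2 = ∫ p in S, g p.1 p.2 := by
    rw [← integral_inter_add_diff (s := Q) (t := Z) hZm (hG_int Q hQm hQfin),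
      inter_eq_self_of_subset_right hZQ, ← hSdef,
      setIntegral_eq_zero_of_forall_eq_zero (fun q hq => hq.2), zero_add]
  have he : e = ∫ p in S, g p.1 p.2 := by rw [← hge, hedge, hsplitG]
  have hrateS : rate g = ∫ p in S, I0 (g p.1 p.2) := by rw [hrate, hsplitF]
  rcases eq_or_ne (volume S) 0 with hS0 | hS0
  · -- degenerate case : S is null
    have hrest : volume.restrict S = 0 := Measure.restrict_eq_zero.mpr hS0
    have he0 : e = 0 := by rw [he, hrest]; simp
    have hr0 : rate g = 0 := by rw [hrateS, hrest]; simp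
    rw [hr0, he0, mul_zero, I0_zero]; norm_num
  · -- main case: Jensen + convexity
    set s : ℝ := (volume S).toReal with hsdef
    have hspos : 0 < s := ENNReal.toReal_pos hS0 hSfin
    have hshalf : s ≤ 1 / 2 := by
      rw [hsdef]
      calc (volume S).toReal ≤ ((1 : ENNReal)/2).toReal :=
        ENNReal.toReal_mono (by norm_num) hSvol
      _ = 1/2 := by norm_num
    have hGS := hG_int S hSm hSfin
    have hFS := hF_int S hSm hSfin
    have hmemS : ∀ᵐ p ∂volume.restrict S, g p.1 p.2 ∈ Icc (0 : ℝ) 1 := by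
      filter_upwards with p; exact hmem p.1 p.2
    have hjensen := convexOn_I0.map_set_average_le (continuous_I0.continuousOn)
      isClosed_Icc hS0 hSfin hmemS hGS hFS
    rw [setAverage_eq, setAverage_eq, measureReal_def, ← hsdef, ← he, ← hrateS] at hjensen
    simp only [smul_eq_mul] at hjensen
    -- so I0 (s⁻¹ * e) ≤ s⁻¹ * rate g
    have hkey : s * I0 (s⁻¹ * e) ≤ rate g := by
      have := mul_le_mul_of_nonneg_left hjensen (le_of_lt hspos)
      rwa [← mul_assoc, mul_inv_cancel₀ (ne_of_gt hspos), one_mul] at this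
    -- e ∈ [0, s]
    have he_nonneg : 0 ≤ e := by
      rw [he]
      exact setIntegral_nonneg hSm (fun p _ => (hmem p.1 p.2).1)
    have he_le : e ≤ s := by
      haveI : IsFiniteMeasure (volume.restrict S) :=
        ⟨by rw [Measure.restrict_apply_univ]; exact lt_of_le_of_ne le_top hSfin⟩
      rw [he, hsdef]
      calc ∫ p in S, g p.1 p.2 ≤ ∫ _ in S, (1 : ℝ) :=
        integral_mono hGS (integrable_const 1) (fun p => (hmem p.1 p.2).2)
      _ = (volume S).toReal := by rw [setIntegral_const]; simp [measureReal_def]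
    have hes_mem : s⁻¹ * e ∈ Icc (0 : ℝ) 1 := by
      constructor
      · positivity
      · rw [inv_mul_le_iff₀ hspos, mul_one]; exact he_le
    -- convexity trick : I0 (2e) ≤ 2s * I0 (e/s)
    have h0mem : (0 : ℝ) ∈ Icc (0 : ℝ) 1 := by norm_num
    have hconv := convexOn_I0.2 hes_mem h0mem (by linarith : (0:ℝ) ≤ 2*s)
      (by linarith : (0:ℝ) ≤ 1 - 2*s) (by ring)
    simp only [smul_eq_mul, mul_zero, add_zero, I0_zero] at hconv
    have h2e : 2 * s * (s⁻¹ * e) = 2 * e := by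
      field_simp
    rw [h2e] at hconv
    -- combine
    have : I0 (2 * e) ≤ 2 * rate g := by
      calc I0 (2 * e) ≤ 2 * s * I0 (s⁻¹ * e) := hconv
      _ = 2 * (s * I0 (s⁻¹ * e)) := by ring
      _ ≤ 2 * rate g := by linarith [hkey]
    linarith
end

section
/- Let ḡ be a graphon taking only the values 0 and 1 almost everywhere, with t(ḡ) = 0 and e(ḡ) = 1/2. Then ḡ is equivalent to the graphon b defined by b(x,y) = 1 if x < 1/2 < y or y < 1/2 < x, and b(x,y) = 0 otherwise. -/
open MeasureTheory Real Set Filter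

/-- The complete balanced bipartite graphon. -/
noncomputable def bipOne : ℝ → ℝ → ℝ := fun x y =>
  if (x < 1 / 2 ∧ 1 / 2 < y) ∨ (y < 1 / 2 ∧ 1 / 2 < x) then 1 else 0



noncomputable section Aux

section Helpers

variable {α β : Type*} [MeasurableSpace α] [MeasurableSpace β]

lemma bdd_int (μ : Measure α) [IsFiniteMeasure μ] {f : α → ℝ}
    (hf : AEStronglyMeasurable f μ) (h0 : ∀ x, 0 ≤ f x) (h1 : ∀ x, f x ≤ 1) :
    Integrable f μ := by
  refine (integrable_const (1:ℝ)).mono' hf (ae_of_all _ fun x => ?_)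
  rw [Real.norm_eq_abs, abs_le]; exact ⟨by linarith [h0 x], h1 x⟩

lemma mp_fst {μ ν : Measure α} [SFinite μ] [SFinite ν] [IsProbabilityMeasure ν] :
    MeasurePreserving (Prod.fst : α × α → α) (μ.prod ν) μ :=
  ⟨measurable_fst, by rw [Measure.map_fst_prod]; simp⟩

lemma mp_snd {μ ν : Measure α} [SFinite μ] [SFinite ν] [IsProbabilityMeasure μ] :
    MeasurePreserving (Prod.snd : α × α → α) (μ.prod ν) ν :=
  ⟨measurable_snd, by rw [Measure.map_snd_prod]; simp⟩

lemma ae_fst {μ : Measure α} [SFinite μ] [IsProbabilityMeasure μ] {p : α → Prop}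
    (h : ∀ᵐ x ∂μ, p x) : ∀ᵐ q ∂(μ.prod μ), p q.1 :=
  mp_fst.quasiMeasurePreserving.ae h

lemma ae_snd {μ : Measure α} [SFinite μ] [IsProbabilityMeasure μ] {p : α → Prop}
    (h : ∀ᵐ x ∂μ, p x) : ∀ᵐ q ∂(μ.prod μ), p q.2 :=
  mp_snd.quasiMeasurePreserving.ae h

lemma ae_swap {μ : Measure α} [SFinite μ] {p : α × α → Prop}
    (h : ∀ᵐ q ∂(μ.prod μ), p q) : ∀ᵐ q ∂(μ.prod μ), p q.swap :=
  (⟨measurable_swap, Measure.prod_swap⟩ :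
    MeasurePreserving (Prod.swap : α × α → α × α) (μ.prod μ) (μ.prod μ)).quasiMeasurePreserving.ae h

lemma ae_prod_of_ae_ae {μ ν : Measure α} [SFinite ν] {p : α × α → Prop}
    (hp : MeasurableSet {q : α × α | p q}) (h : ∀ᵐ x ∂μ, ∀ᵐ y ∂ν, p (x, y)) :
    ∀ᵐ q ∂(μ.prod ν), p q := by
  rw [ae_iff]
  have hc : MeasurableSet {q : α × α | ¬ p q} := hp.compl
  rw [Measure.measure_prod_null hc]
  filter_upwards [h] with x hx
  simpa [ae_iff] using hx

end Helpers

abbrev μ₀ : Measure ℝ := volume.restrict (Icc (0:ℝ) 1)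

instance : IsProbabilityMeasure μ₀ :=
  ⟨by rw [Measure.restrict_apply_univ, Real.volume_Icc]; norm_num⟩

set_option maxHeartbeats 2000000 in
lemma structure_lemma (g : ℝ → ℝ → ℝ) (hg : IsGraphon g)
    (h01 : ∀ᵐ q ∂(μ₀.prod μ₀), g q.1 q.2 = 0 ∨ g q.1 q.2 = 1)
    (hgt : triangleDensity g = 0) (hge : edgeDensity g = 1 / 2) :
    ∃ A : Set ℝ, MeasurableSet A ∧ A ⊆ Icc 0 1 ∧ volume A = ENNReal.ofReal (1/2) ∧
      ∀ᵐ q ∂(μ₀.prod μ₀),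
        g q.1 q.2 = ((A ×ˢ Aᶜ) ∪ (Aᶜ ×ˢ A)).indicator (1 : ℝ × ℝ → ℝ) q := by
  obtain ⟨hgm, hgs, hgb⟩ := hg
  have hg0 : ∀ x y, 0 ≤ g x y := fun x y => (hgb x y).1
  have hg1 : ∀ x y, g x y ≤ 1 := fun x y => (hgb x y).2
  -- sections are measurable
  have hsec : ∀ x, Measurable (g x) := fun x =>
    hgm.comp (measurable_const.prodMk measurable_id)
  have hsec' : ∀ x, Measurable (fun y => g y x) := fun x =>
    hgm.comp (measurable_id.prodMk measurable_const)
  have hint : ∀ x, Integrable (g x) μ₀ := fun x =>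
    bdd_int μ₀ (hsec x).aestronglyMeasurable (hg0 x) (hg1 x)
  -- degree
  set d : ℝ → ℝ := fun x => ∫ y, g x y ∂μ₀ with hd_def
  have hdm : Measurable d := (hgm.stronglyMeasurable.integral_prod_right).measurable
  have hd0 : ∀ x, 0 ≤ d x := fun x => integral_nonneg (hg0 x)
  have hd1 : ∀ x, d x ≤ 1 := fun x => by
    calc d x ≤ ∫ _, (1:ℝ) ∂μ₀ := integral_mono (hint x) (integrable_const 1) (hg1 x)
    _ = 1 := by simp
  -- codegree
  set c : ℝ → ℝ → ℝ := fun x y => ∫ z, g x z * g y z ∂μ₀ with hc_def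
  have hcm : Measurable (fun q : ℝ × ℝ => c q.1 q.2) := by
    have hF : Measurable (fun q : (ℝ × ℝ) × ℝ => g q.1.1 q.2 * g q.1.2 q.2) :=
      (hgm.comp ((measurable_fst.comp measurable_fst).prodMk measurable_snd)).mul
        (hgm.comp ((measurable_snd.comp measurable_fst).prodMk measurable_snd))
    exact hF.stronglyMeasurable.integral_prod_right'.measurable
  have hcint : ∀ x y, Integrable (fun z => g x z * g y z) μ₀ := fun x y =>
    bdd_int μ₀ ((hsec x).mul (hsec y)).aestronglyMeasurable
      (fun z => mul_nonneg (hg0 x z) (hg0 y z))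
      (fun z => mul_le_one₀ (hg1 x z) (hg0 y z) (hg1 y z))
  have hc0 : ∀ x y, 0 ≤ c x y := fun x y =>
    integral_nonneg fun z => mul_nonneg (hg0 x z) (hg0 y z)
  -- Step A: triangle integrand vanishes a.e.
  set T : ℝ × (ℝ × ℝ) → ℝ := fun p => g p.1 p.2.1 * g p.2.1 p.2.2 * g p.2.2 p.1 with hT_def
  have hTm : Measurable T := by
    refine ((hgm.comp (measurable_fst.prodMk (measurable_fst.comp measurable_snd))).mul
      (hgm.comp ((measurable_fst.comp measurable_snd).prodMk
        (measurable_snd.comp measurable_snd)))).mul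
      (hgm.comp ((measurable_snd.comp measurable_snd).prodMk measurable_fst))
  have hT0 : ∀ p, 0 ≤ T p := fun p =>
    mul_nonneg (mul_nonneg (hg0 _ _) (hg0 _ _)) (hg0 _ _)
  have hT1 : ∀ p, T p ≤ 1 := fun p =>
    mul_le_one₀ (mul_le_one₀ (hg1 _ _) (hg0 _ _) (hg1 _ _)) (hg0 _ _) (hg1 _ _)
  have hTint : Integrable T (μ₀.prod (μ₀.prod μ₀)) :=
    bdd_int _ hTm.aestronglyMeasurable hT0 hT1
  have htD : ∫ p, T p ∂(μ₀.prod (μ₀.prod μ₀)) = triangleDensity g := by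
    rw [integral_prod _ hTint]
    refine integral_congr_ae ?_
    filter_upwards [hTint.prod_right_ae] with x hx
    exact integral_prod _ hx
  have hTae : ∀ᵐ p ∂(μ₀.prod (μ₀.prod μ₀)), T p = 0 := by
    have h := (integral_eq_zero_iff_of_nonneg_ae (ae_of_all _ hT0) hTint).1
      (htD.trans hgt)
    filter_upwards [h] with p hp using hp
  -- Step C: a.e. pair has g * c = 0
  have hCiter : ∀ᵐ x ∂μ₀, ∀ᵐ y ∂μ₀, g x y * c x y = 0 := by
    filter_upwards [Measure.ae_ae_of_ae_prod hTae] with x hx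
    filter_upwards [Measure.ae_ae_of_ae_prod hx] with y hy
    have h0 : ∫ z, g x y * (g x z * g y z) ∂μ₀ = 0 := by
      rw [integral_eq_zero_iff_of_nonneg_ae]
      · filter_upwards [hy] with z hz
        have h1 : g x y * g y z * g z x = 0 := hz
        have h2 : g x y * (g x z * g y z) = g x y * g y z * g z x := by
          rw [hgs z x]; ring
        simp only [Pi.zero_apply]; rw [h2, h1]
      · exact ae_of_all _ fun z =>
          mul_nonneg (hg0 _ _) (mul_nonneg (hg0 _ _) (hg0 _ _))
      · exact (hcint x y).const_mul _
    rw [integral_const_mul] at h0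
    exact h0
  have hCm : MeasurableSet {q : ℝ × ℝ | g q.1 q.2 * c q.1 q.2 = 0} :=
    measurableSet_eq_fun (hgm.mul hcm) measurable_const
  have hC : ∀ᵐ q ∂(μ₀.prod μ₀), g q.1 q.2 * c q.1 q.2 = 0 :=
    ae_prod_of_ae_ae hCm hCiter
  -- integrability on the product
  have hgpm : Measurable (fun q : ℝ × ℝ => g q.1 q.2) := hgm
  have hgpint : Integrable (fun q : ℝ × ℝ => g q.1 q.2) (μ₀.prod μ₀) :=
    bdd_int _ hgpm.aestronglyMeasurable (fun q => hg0 _ _) (fun q => hg1 _ _)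
  have he2 : ∫ q, g q.1 q.2 ∂(μ₀.prod μ₀) = 1 / 2 := by
    rw [integral_prod _ hgpint]; exact hge
  have hdd_int : Integrable (fun x => d x * d x) μ₀ :=
    bdd_int _ (hdm.mul hdm).aestronglyMeasurable
      (fun x => mul_nonneg (hd0 x) (hd0 x))
      (fun x => mul_le_one₀ (hd1 x) (hd0 x) (hd1 x))
  have hd_int : Integrable d μ₀ := bdd_int _ hdm.aestronglyMeasurable hd0 hd1
  have hed : ∫ x, d x ∂μ₀ = 1 / 2 := hge
  -- ∫ g (d x + d y) = 2 ∫ d²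
  have hgd1int : Integrable (fun q : ℝ × ℝ => g q.1 q.2 * d q.1) (μ₀.prod μ₀) :=
    bdd_int _ (hgpm.mul (hdm.comp measurable_fst)).aestronglyMeasurable
      (fun q => mul_nonneg (hg0 _ _) (hd0 _))
      (fun q => mul_le_one₀ (hg1 _ _) (hd0 _) (hd1 _))
  have hgd2int : Integrable (fun q : ℝ × ℝ => g q.1 q.2 * d q.2) (μ₀.prod μ₀) :=
    bdd_int _ (hgpm.mul (hdm.comp measurable_snd)).aestronglyMeasurable
      (fun q => mul_nonneg (hg0 _ _) (hd0 _))
      (fun q => mul_le_one₀ (hg1 _ _) (hd0 _) (hd1 _))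
  have hgd1 : ∫ q, g q.1 q.2 * d q.1 ∂(μ₀.prod μ₀) = ∫ x, d x * d x ∂μ₀ := by
    rw [integral_prod _ hgd1int]
    refine integral_congr_ae (ae_of_all _ fun x => ?_)
    show (∫ y, g x y * d x ∂μ₀) = d x * d x
    rw [integral_mul_const]
  have hgd2 : ∫ q, g q.1 q.2 * d q.2 ∂(μ₀.prod μ₀) = ∫ x, d x * d x ∂μ₀ := by
    have hswap : ∫ q, g q.1 q.2 * d q.2 ∂(μ₀.prod μ₀)
        = ∫ q : ℝ × ℝ, g q.2 q.1 * d q.1 ∂(μ₀.prod μ₀) := by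
      rw [← MeasurePreserving.integral_comp
        (⟨measurable_swap, Measure.prod_swap⟩ :
          MeasurePreserving (Prod.swap : ℝ × ℝ → ℝ × ℝ) (μ₀.prod μ₀) (μ₀.prod μ₀))
        MeasurableEquiv.prodComm.measurableEmbedding
        (fun q : ℝ × ℝ => g q.1 q.2 * d q.2)]
      rfl
    rw [hswap]
    have : ∀ q : ℝ × ℝ, g q.2 q.1 * d q.1 = g q.1 q.2 * d q.1 := fun q => by rw [hgs]
    rw [integral_congr_ae (ae_of_all _ this)]
    exact hgd1
  -- the key a.e. inequality
  have haeI : ∀ᵐ q ∂(μ₀.prod μ₀), g q.1 q.2 * (d q.1 + d q.2) ≤ g q.1 q.2 := by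
    filter_upwards [hC] with q hq
    have h1 : d q.1 + d q.2 ≤ 1 + c q.1 q.2 := by
      have hpt : ∀ z, g q.1 z + g q.2 z ≤ 1 + g q.1 z * g q.2 z := fun z => by
        nlinarith [hg0 q.1 z, hg0 q.2 z, hg1 q.1 z, hg1 q.2 z]
      calc d q.1 + d q.2 = ∫ z, (g q.1 z + g q.2 z) ∂μ₀ :=
            (integral_add (hint q.1) (hint q.2)).symm
        _ ≤ ∫ z, (1 + g q.1 z * g q.2 z) ∂μ₀ :=
            integral_mono ((hint q.1).add (hint q.2))
              ((integrable_const 1).add (hcint q.1 q.2)) hpt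
        _ = 1 + c q.1 q.2 := by
            rw [integral_add (integrable_const 1) (hcint q.1 q.2)]; simp; rfl
    have h2 := mul_le_mul_of_nonneg_left h1 (hg0 q.1 q.2)
    calc g q.1 q.2 * (d q.1 + d q.2) ≤ g q.1 q.2 * (1 + c q.1 q.2) := h2
      _ = g q.1 q.2 + g q.1 q.2 * c q.1 q.2 := by ring
      _ = g q.1 q.2 := by rw [hq]; ring
  -- integrate the inequality
  have hsumint : Integrable (fun q : ℝ × ℝ => g q.1 q.2 * (d q.1 + d q.2)) (μ₀.prod μ₀) := by
    have : (fun q : ℝ × ℝ => g q.1 q.2 * (d q.1 + d q.2))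
        = fun q : ℝ × ℝ => g q.1 q.2 * d q.1 + g q.1 q.2 * d q.2 := by
      funext q; ring
    rw [this]; exact hgd1int.add hgd2int
  have hdd14 : ∫ x, d x * d x ∂μ₀ ≤ 1 / 4 := by
    have hmono := integral_mono_ae hsumint hgpint haeI
    have : ∫ q, g q.1 q.2 * (d q.1 + d q.2) ∂(μ₀.prod μ₀)
        = 2 * ∫ x, d x * d x ∂μ₀ := by
      have hsplit : (fun q : ℝ × ℝ => g q.1 q.2 * (d q.1 + d q.2))
          = fun q : ℝ × ℝ => g q.1 q.2 * d q.1 + g q.1 q.2 * d q.2 := by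
        funext q; ring
      rw [hsplit, integral_add hgd1int hgd2int, hgd1, hgd2]; ring
    rw [this, he2] at hmono; linarith
  -- variance trick : d = 1/2 a.e.
  have hvar_int : Integrable (fun x => (d x - 1/2)^2) μ₀ := by
    have : (fun x => (d x - 1/2)^2) = fun x => d x * d x - d x + 1/4 := by
      funext x; ring
    rw [this]
    exact Integrable.add (hdd_int.sub hd_int) (integrable_const _)
  have hvar0 : ∫ x, (d x - 1/2)^2 ∂μ₀ = 0 := by
    have hle : ∫ x, (d x - 1/2)^2 ∂μ₀ ≤ 0 := by
      have : (fun x => (d x - 1/2)^2) = fun x => d x * d x - d x + 1/4 := by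
        funext x; ring
      have hsub_int : Integrable (fun x => d x * d x - d x) μ₀ := hdd_int.sub hd_int
      rw [this, integral_add hsub_int (integrable_const _),
        integral_sub hdd_int hd_int, hed]
      simp only [integral_const, probReal_univ, measure_univ, ENNReal.toReal_one, smul_eq_mul, one_mul]
      linarith
    have hge' : 0 ≤ ∫ x, (d x - 1/2)^2 ∂μ₀ :=
      integral_nonneg fun x => sq_nonneg _
    linarith
  have hd_half : ∀ᵐ x ∂μ₀, d x = 1 / 2 := by
    have := (integral_eq_zero_iff_of_nonneg_ae
      (ae_of_all _ fun x => sq_nonneg (d x - 1/2)) hvar_int).1 hvar0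
    filter_upwards [this] with x hx
    have : (d x - 1/2)^2 = 0 := hx
    have := pow_eq_zero_iff (n := 2) (by norm_num) |>.1 this
    linarith [sub_eq_zero.1 this]
  -- Step E: along a.e. edge, neighborhoods partition [0,1]
  have hE : ∀ᵐ q ∂(μ₀.prod μ₀), (g q.1 q.2 ≠ 0 →
      ∀ᵐ z ∂μ₀, g q.1 z + g q.2 z = 1) := by
    filter_upwards [hC, ae_fst hd_half, ae_snd hd_half] with q hq hq1 hq2
    intro hne
    have hc0' : c q.1 q.2 = 0 := by
      rcases mul_eq_zero.1 hq with h | h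
      · exact absurd h hne
      · exact h
    have hprod0 : ∀ᵐ z ∂μ₀, g q.1 z * g q.2 z = 0 := by
      have h := (integral_eq_zero_iff_of_nonneg_ae
        (ae_of_all _ fun z => mul_nonneg (hg0 _ _) (hg0 _ _)) (hcint q.1 q.2)).1 hc0'
      filter_upwards [h] with z hz using hz
    have hcompl_int : Integrable (fun z => (1 - g q.1 z) * (1 - g q.2 z)) μ₀ :=
      bdd_int _ (((measurable_const.sub (hsec q.1)).mul
          (measurable_const.sub (hsec q.2)))).aestronglyMeasurable
        (fun z => mul_nonneg (by linarith [hg1 q.1 z]) (by linarith [hg1 q.2 z]))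
        (fun z => mul_le_one₀ (by linarith [hg0 q.1 z]) (by linarith [hg1 q.2 z])
          (by linarith [hg0 q.2 z]))
    have hI0 : ∫ z, (1 - g q.1 z) * (1 - g q.2 z) ∂μ₀ = 0 := by
      have hexp : (fun z => (1 - g q.1 z) * (1 - g q.2 z))
          = fun z => 1 - g q.1 z - g q.2 z + g q.1 z * g q.2 z := by funext z; ring
      have h1int : Integrable (fun z => (1:ℝ) - g q.1 z) μ₀ :=
        (integrable_const 1).sub (hint q.1)
      have h2int : Integrable (fun z => (1:ℝ) - g q.1 z - g q.2 z) μ₀ :=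
        h1int.sub (hint q.2)
      rw [hexp, integral_add h2int (hcint q.1 q.2), integral_sub h1int (hint q.2),
        integral_sub (integrable_const 1) (hint q.1)]
      have e1 : ∫ z, g q.1 z ∂μ₀ = d q.1 := rfl
      have e2 : ∫ z, g q.2 z ∂μ₀ = d q.2 := rfl
      have e3 : ∫ z, g q.1 z * g q.2 z ∂μ₀ = c q.1 q.2 := rfl
      rw [e1, e2, e3, hq1, hq2, hc0']
      simp only [integral_const, measure_univ, ENNReal.toReal_one, one_smul]
      norm_num
    have hzero : ∀ᵐ z ∂μ₀, (1 - g q.1 z) * (1 - g q.2 z) = 0 := by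
      have h := (integral_eq_zero_iff_of_nonneg_ae
        (ae_of_all _ fun z => mul_nonneg (by linarith [hg1 q.1 z]) (by linarith [hg1 q.2 z]))
        hcompl_int).1 hI0
      filter_upwards [h] with z hz using hz
    filter_upwards [hprod0, hzero] with z h1 h2
    nlinarith [h1, h2]
  -- Step F: pick a typical point x₀ and define A as its neighborhood
  have hQ : ∀ᵐ x ∂μ₀, ∀ᵐ y ∂μ₀, (g x y = 0 ∨ g x y = 1) :=
    Measure.ae_ae_of_ae_prod h01
  have hEiter : ∀ᵐ x ∂μ₀, ∀ᵐ y ∂μ₀, (g x y ≠ 0 →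
      ∀ᵐ z ∂μ₀, g x z + g y z = 1) := Measure.ae_ae_of_ae_prod hE
  have hNeBot : (ae μ₀).NeBot := inferInstance
  obtain ⟨x₀, hx0d, hx0Q, hx0E⟩ := (hd_half.and (hQ.and hEiter)).exists
  set A : Set ℝ := Icc 0 1 ∩ {y | g x₀ y ≠ 0} with hA_def
  have hAm : MeasurableSet A :=
    measurableSet_Icc.inter ((hsec x₀) (measurableSet_singleton 0).compl)
  have hAsub : A ⊆ Icc 0 1 := inter_subset_left
  -- the measure of A is 1/2
  have hgind : (fun y => g x₀ y) =ᵐ[μ₀] A.indicator (1 : ℝ → ℝ) := by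
    filter_upwards [hx0Q, ae_restrict_mem measurableSet_Icc] with y hy hyI
    rcases hy with h | h
    · have : y ∉ A := fun hA => hA.2 h
      rw [h, indicator_of_notMem this]
    · have : y ∈ A := ⟨hyI, by show g x₀ y ≠ 0; rw [h]; norm_num⟩
      rw [h, indicator_of_mem this]; rfl
  have hmuA : μ₀ A = ENNReal.ofReal (1/2) := by
    have h1 : ∫ y, g x₀ y ∂μ₀ = (μ₀ A).toReal := by
      rw [integral_congr_ae hgind, integral_indicator_one hAm]; rfl
    have h2 : (μ₀ A).toReal = 1/2 := by rw [← h1]; exact hx0d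
    have h3 : μ₀ A ≠ ⊤ := (measure_lt_top μ₀ A).ne
    rw [← ENNReal.ofReal_toReal h3, h2]
  have hvolA : volume A = ENNReal.ofReal (1/2) := by
    rw [← hmuA, Measure.restrict_apply hAm, inter_eq_self_of_subset_left hAsub]
  have hmuAc : μ₀ Aᶜ = ENNReal.ofReal (1/2) := by
    rw [measure_compl hAm (measure_lt_top μ₀ A).ne, hmuA, measure_univ]
    rw [← ENNReal.ofReal_one]
    rw [← ENNReal.ofReal_sub _ (by norm_num)]
    norm_num
  -- rows through A are determined
  have SA1 : ∀ᵐ y ∂μ₀, ∀ᵐ z ∂μ₀, (y ∈ A → g y z = Aᶜ.indicator (1:ℝ→ℝ) z) := by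
    filter_upwards [hx0E] with y hyE
    by_cases hyA : y ∈ A
    · have h1 : ∀ᵐ z ∂μ₀, g x₀ z + g y z = 1 := hyE hyA.2
      filter_upwards [h1, hx0Q, ae_restrict_mem measurableSet_Icc] with z hz hzQ hzI
      intro _
      by_cases hzA : z ∈ A
      · have hg1' : g x₀ z = 1 := by
          rcases hzQ with h | h
          · exact absurd h hzA.2
          · exact h
        rw [indicator_of_notMem (by simpa using hzA : z ∉ Aᶜ)]
        linarith
      · have hg0' : g x₀ z = 0 := by
          by_contra hne; exact hzA ⟨hzI, hne⟩
        rw [indicator_of_mem (by simpa using hzA : z ∈ Aᶜ)]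
        simp only [Pi.one_apply]
        linarith
    · filter_upwards with z h
      exact absurd h hyA
  have hS1m : MeasurableSet {q : ℝ × ℝ | q.1 ∈ A → g q.1 q.2 = Aᶜ.indicator (1:ℝ→ℝ) q.2} := by
    have heq : {q : ℝ × ℝ | q.1 ∈ A → g q.1 q.2 = Aᶜ.indicator (1:ℝ→ℝ) q.2}
        = (Prod.fst ⁻¹' A)ᶜ ∪ {q : ℝ × ℝ | g q.1 q.2 = Aᶜ.indicator (1:ℝ→ℝ) q.2} := by
      ext q; simp [imp_iff_not_or]
    rw [heq]
    exact ((hAm.preimage measurable_fst).compl).union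
      (measurableSet_eq_fun hgm ((measurable_one.indicator hAm.compl).comp measurable_snd))
  have S1 : ∀ᵐ q ∂(μ₀.prod μ₀), (q.1 ∈ A → g q.1 q.2 = Aᶜ.indicator (1:ℝ→ℝ) q.2) :=
    ae_prod_of_ae_ae hS1m SA1
  have S2 : ∀ᵐ q ∂(μ₀.prod μ₀), (q.2 ∈ A → g q.1 q.2 = Aᶜ.indicator (1:ℝ→ℝ) q.1) := by
    filter_upwards [ae_swap (μ := μ₀)
      (p := fun q : ℝ × ℝ => q.1 ∈ A → g q.1 q.2 = Aᶜ.indicator (1:ℝ→ℝ) q.2) S1] with q hq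
    simp only [Prod.fst_swap, Prod.snd_swap] at hq
    intro h2
    have := hq h2
    rwa [hgs q.2 q.1] at this
  -- accounting
  set S : Set (ℝ × ℝ) := (A ×ˢ Aᶜ) ∪ (Aᶜ ×ˢ A) with hS_def
  have hSm : MeasurableSet S := (hAm.prod hAm.compl).union (hAm.compl.prod hAm)
  have hdisj : Disjoint (A ×ˢ Aᶜ) (Aᶜ ×ˢ A) := by
    rw [Set.disjoint_left]
    rintro ⟨a, b⟩ ⟨h1, h2⟩ ⟨h3, h4⟩
    exact h3 h1
  have hmuS : (μ₀.prod μ₀) S = ENNReal.ofReal (1/2) := by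
    rw [hS_def, measure_union hdisj (hAm.compl.prod hAm),
      Measure.prod_prod, Measure.prod_prod, hmuA, hmuAc,
      ← ENNReal.ofReal_mul (by norm_num), ← ENNReal.ofReal_add (by norm_num) (by norm_num)]
    norm_num
  have hH : ∫ q, S.indicator (1 : ℝ × ℝ → ℝ) q ∂(μ₀.prod μ₀) = 1/2 := by
    rw [integral_indicator_one hSm, measureReal_def, hmuS, ENNReal.toReal_ofReal (by norm_num)]
  have hHint : Integrable (S.indicator (1 : ℝ × ℝ → ℝ)) (μ₀.prod μ₀) :=
    bdd_int _ (measurable_one.indicator hSm).aestronglyMeasurable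
      (fun q => by by_cases h : q ∈ S <;> simp [Set.indicator_apply, h])
      (fun q => by by_cases h : q ∈ S <;> simp [Set.indicator_apply, h])
  have S12 : ∀ᵐ q ∂(μ₀.prod μ₀),
      ((q.1 ∈ A ∨ q.2 ∈ A) → g q.1 q.2 = S.indicator (1 : ℝ × ℝ → ℝ) q) := by
    filter_upwards [S1, S2] with q h1 h2
    intro hor
    by_cases h1A : q.1 ∈ A <;> by_cases h2A : q.2 ∈ A
    · rw [h1 h1A, indicator_of_notMem (by simpa using h2A : q.2 ∉ Aᶜ),
        indicator_of_notMem (show q ∉ S by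
          rintro (⟨_, hb⟩ | ⟨ha, _⟩)
          · exact hb h2A
          · exact ha h1A)]
    · rw [h1 h1A, indicator_of_mem (by simpa using h2A : q.2 ∈ Aᶜ),
        indicator_of_mem (show q ∈ S from Or.inl ⟨h1A, by simpa using h2A⟩)]
      rfl
    · rw [h2 h2A, indicator_of_mem (by simpa using h1A : q.1 ∈ Aᶜ),
        indicator_of_mem (show q ∈ S from Or.inr ⟨by simpa using h1A, h2A⟩)]
      rfl
    · rcases hor with h | h
      · exact absurd h h1A
      · exact absurd h h2A
  have hgeH : ∀ᵐ q ∂(μ₀.prod μ₀), 0 ≤ g q.1 q.2 - S.indicator (1 : ℝ × ℝ → ℝ) q := by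
    filter_upwards [S12] with q hq
    by_cases hor : q.1 ∈ A ∨ q.2 ∈ A
    · rw [hq hor]; simp
    · push_neg at hor
      rw [indicator_of_notMem (show q ∉ S by
        rintro (⟨ha, _⟩ | ⟨_, hb⟩)
        · exact hor.1 ha
        · exact hor.2 hb)]
      simpa using hg0 q.1 q.2
  have hsubint : Integrable (fun q : ℝ × ℝ => g q.1 q.2 - S.indicator (1 : ℝ × ℝ → ℝ) q)
      (μ₀.prod μ₀) := hgpint.sub hHint
  have hdiff0 : ∫ q, (g q.1 q.2 - S.indicator (1 : ℝ × ℝ → ℝ) q) ∂(μ₀.prod μ₀) = 0 := by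
    rw [integral_sub hgpint hHint, he2, hH]; ring
  have hfinal := (integral_eq_zero_iff_of_nonneg_ae hgeH hsubint).1 hdiff0
  refine ⟨A, hAm, hAsub, hvolA, ?_⟩
  filter_upwards [hfinal] with q hq
  have : g q.1 q.2 - S.indicator (1 : ℝ × ℝ → ℝ) q = 0 := hq
  rw [hS_def] at this
  linarith



/-- cumulative mass of `A` up to `t` -/
def cum (A : Set ℝ) (t : ℝ) : ℝ := (volume (A ∩ Iic t)).toReal

variable {A : Set ℝ}

lemma cum_fin (hAsub : A ⊆ Icc 0 1) (t : ℝ) : volume (A ∩ Iic t) ≠ ⊤ :=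
  (lt_of_le_of_lt (measure_mono (inter_subset_left.trans hAsub))
    (by rw [Real.volume_Icc]; norm_num)).ne

lemma volA_fin (hAsub : A ⊆ Icc 0 1) : volume A ≠ ⊤ :=
  (lt_of_le_of_lt (measure_mono hAsub) (by rw [Real.volume_Icc]; norm_num)).ne

lemma cum_mono (hAsub : A ⊆ Icc 0 1) : Monotone (cum A) := fun s t h =>
  ENNReal.toReal_mono (cum_fin hAsub t)
    (measure_mono (inter_subset_inter_right _ (Iic_subset_Iic.2 h)))

lemma cum_nonneg (t : ℝ) : 0 ≤ cum A t := ENNReal.toReal_nonneg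

lemma cum_le (hAsub : A ⊆ Icc 0 1) (t : ℝ) : cum A t ≤ (volume A).toReal :=
  ENNReal.toReal_mono (volA_fin hAsub) (measure_mono inter_subset_left)

lemma cum_neg (hAsub : A ⊆ Icc 0 1) {t : ℝ} (ht : t < 0) : cum A t = 0 := by
  have : A ∩ Iic t = ∅ := by
    ext x; simp only [mem_inter_iff, mem_Iic, mem_empty_iff_false, iff_false, not_and]
    intro hx; have := (hAsub hx).1; linarith
  rw [cum, this]; simp

lemma cum_one (hAsub : A ⊆ Icc 0 1) {t : ℝ} (ht : 1 ≤ t) : cum A t = (volume A).toReal := by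
  have : A ∩ Iic t = A := inter_eq_self_of_subset_left fun x hx => le_trans (hAsub hx).2 ht
  rw [cum, this]

lemma cum_continuous (hAm : MeasurableSet A) (hAsub : A ⊆ Icc 0 1) :
    Continuous (cum A) := by
  refine (LipschitzWith.of_dist_le_mul (K := 1) (fun s t => ?_)).continuous
  wlog h : t ≤ s generalizing s t
  · rw [dist_comm, dist_comm s t]; exact this t s (by linarith [le_of_not_ge h])
  have hsplit : volume (A ∩ Iic s) = volume (A ∩ Iic t) + volume (A ∩ Ioc t s) := by
    rw [← measure_union ?hd ((hAm.inter measurableSet_Ioc))]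
    · congr 1; rw [← inter_union_distrib_left, Iic_union_Ioc_eq_Iic h]
    case hd =>
      rw [Set.disjoint_left]; rintro x ⟨-, h1⟩ ⟨-, h2⟩
      exact absurd h1 (not_le.2 h2.1)
  have hioc : volume (A ∩ Ioc t s) ≤ ENNReal.ofReal (s - t) := by
    calc volume (A ∩ Ioc t s) ≤ volume (Ioc t s) := measure_mono inter_subset_right
    _ = ENNReal.ofReal (s - t) := Real.volume_Ioc
  have h1 : cum A s - cum A t = (volume (A ∩ Ioc t s)).toReal := by
    rw [cum, cum, hsplit, ENNReal.toReal_add (cum_fin hAsub t)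
      ((lt_of_le_of_lt hioc (by simp [ENNReal.ofReal_lt_top])).ne)]
    ring
  rw [Real.dist_eq, Real.dist_eq]
  simp only [NNReal.coe_one, one_mul]
  rw [abs_of_nonneg (by rw [h1]; exact ENNReal.toReal_nonneg)]
  rw [h1]
  calc (volume (A ∩ Ioc t s)).toReal ≤ (ENNReal.ofReal (s - t)).toReal :=
        ENNReal.toReal_mono ENNReal.ofReal_ne_top hioc
  _ = s - t := ENNReal.toReal_ofReal (by linarith)
  _ ≤ |s - t| := le_abs_self _

/-- the key level-set computation -/
lemma cum_level (hAm : MeasurableSet A) (hAsub : A ⊆ Icc 0 1) (s : ℝ) :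
    volume (A ∩ {t | cum A t ≤ s})
      = ENNReal.ofReal (min (max s 0) (volume A).toReal) := by
  set a := (volume A).toReal with ha_def
  have ha0 : 0 ≤ a := ENNReal.toReal_nonneg
  rcases lt_or_ge s 0 with hs | hs
  · have hempty : A ∩ {t | cum A t ≤ s} = ∅ := by
      ext t
      simp only [mem_inter_iff, mem_setOf_eq, mem_empty_iff_false, iff_false, not_and]
      intro _ h; linarith [cum_nonneg (A := A) t]
    rw [hempty, max_eq_right hs.le, min_eq_left ha0]
    simp
  rcases le_or_gt a s with hs2 | hs2
  · have hall : A ∩ {t | cum A t ≤ s} = A := by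
      refine inter_eq_self_of_subset_left fun t _ => ?_
      exact le_trans (cum_le hAsub t) hs2
    rw [hall, max_eq_left hs, min_eq_right hs2, ha_def,
      ENNReal.ofReal_toReal (volA_fin hAsub)]
  · -- 0 ≤ s < a
    set L := {t | cum A t ≤ s} with hL_def
    have hne : (-1:ℝ) ∈ L := by
      show cum A (-1) ≤ s; rw [cum_neg hAsub (by norm_num)]; exact hs
    have hbdd : BddAbove L := by
      refine ⟨1, fun t ht => ?_⟩
      by_contra hlt
      push_neg at hlt
      have := cum_one hAsub hlt.le
      have : cum A t ≤ s := ht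
      rw [cum_one hAsub hlt.le] at this
      linarith
    have hclosed : IsClosed L :=
      IsClosed.preimage (cum_continuous hAm hAsub) isClosed_Iic
    have hτL : sSup L ∈ L := hclosed.csSup_mem ⟨-1, hne⟩ hbdd
    have hLIic : L = Iic (sSup L) := by
      ext t
      constructor
      · exact fun ht => le_csSup hbdd ht
      · exact fun ht => le_trans (cum_mono hAsub ht) hτL
    have hcumτ : cum A (sSup L) = s := by
      refine le_antisymm hτL ?_
      have hIVT : s ∈ cum A '' Icc (-1) 1 := by
        refine intermediate_value_Icc (by norm_num)
          (cum_continuous hAm hAsub).continuousOn ?_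
        rw [cum_neg hAsub (by norm_num), cum_one hAsub le_rfl]
        exact ⟨hs, hs2.le⟩
      obtain ⟨c, -, hc⟩ := hIVT
      have : c ∈ L := by rw [hL_def]; exact le_of_eq hc
      calc s = cum A c := hc.symm
      _ ≤ cum A (sSup L) := cum_mono hAsub (le_csSup hbdd this)
    have : volume (A ∩ L) = volume (A ∩ Iic (sSup L)) := by rw [← hLIic]
    rw [this, max_eq_left hs, min_eq_left hs2.le, ← hcumτ, cum,
      ENNReal.ofReal_toReal (cum_fin hAsub _)]

/-- strictness at the top level -/
lemma cum_top_null (hAm : MeasurableSet A) (hAsub : A ⊆ Icc 0 1) :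
    volume (A ∩ {t | (volume A).toReal ≤ cum A t}) = 0 := by
  set a := (volume A).toReal with ha_def
  have ha0 : 0 ≤ a := ENNReal.toReal_nonneg
  rcases eq_or_lt_of_le ha0 with ha | ha
  · refine le_antisymm ?_ zero_le
    calc volume (A ∩ _) ≤ volume A := measure_mono inter_subset_left
    _ = 0 := by rw [← ENNReal.ofReal_toReal (volA_fin hAsub), ← ha_def, ← ha]; simp
  · refine le_antisymm (ENNReal.le_of_forall_pos_le_add fun ε hε _ => ?_) zero_le
    rw [zero_add]
    set δ := min a (ε : ℝ) with hδ_def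
    have hδ0 : 0 < δ := lt_min ha (by exact_mod_cast hε)
    have hδa : δ ≤ a := min_le_left _ _
    have hmeas2 : MeasurableSet (A ∩ {t | a ≤ cum A t}) :=
      hAm.inter ((cum_mono hAsub).measurable measurableSet_Ici)
    have hdisj : Disjoint (A ∩ {t | cum A t ≤ a - δ}) (A ∩ {t | a ≤ cum A t}) := by
      rw [Set.disjoint_left]
      rintro t ⟨-, h1⟩ ⟨-, h2⟩
      have h1' : cum A t ≤ a - δ := h1
      have h2' : a ≤ cum A t := h2
      linarith
    have hsum : volume (A ∩ {t | cum A t ≤ a - δ}) + volume (A ∩ {t | a ≤ cum A t})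
        ≤ volume A := by
      rw [← measure_union hdisj hmeas2]
      exact measure_mono (union_subset inter_subset_left inter_subset_left)
    have h1 : volume (A ∩ {t | cum A t ≤ a - δ}) = ENNReal.ofReal (a - δ) := by
      rw [cum_level hAm hAsub, max_eq_left (by linarith), min_eq_left (by linarith)]
    rw [h1, ← ENNReal.ofReal_toReal (volA_fin hAsub), ← ha_def, add_comm] at hsum
    have h2 := ENNReal.le_sub_of_add_le_right ENNReal.ofReal_ne_top hsum
    calc volume (A ∩ {t | a ≤ cum A t})
        ≤ ENNReal.ofReal a - ENNReal.ofReal (a - δ) := h2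
    _ = ENNReal.ofReal (a - (a - δ)) := (ENNReal.ofReal_sub _ (by linarith)).symm
    _ = ENNReal.ofReal δ := by rw [sub_sub_cancel]
    _ ≤ ENNReal.ofReal (ε : ℝ) := ENNReal.ofReal_le_ofReal (min_le_right _ _)
    _ = (ε : ENNReal) := ENNReal.ofReal_coe_nnreal

open Classical in
def half2 (A : Set ℝ) : ℝ → ℝ := fun x =>
  if x ∈ A then cum A x else 1/2 + cum (Icc 0 1 \ A) x

lemma half2_mp (hAm : MeasurableSet A) (hAsub : A ⊆ Icc 0 1)
    (hvolA : volume A = ENNReal.ofReal (1/2)) :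
    MeasurePreserving (half2 A) μ₀ μ₀ := by
  set B := Icc 0 1 \ A with hB_def
  have hBm : MeasurableSet B := measurableSet_Icc.diff hAm
  have hBsub : B ⊆ Icc 0 1 := diff_subset
  have hvolB : volume B = ENNReal.ofReal (1/2) := by
    rw [hB_def, measure_diff hAsub hAm.nullMeasurableSet (volA_fin hAsub),
      Real.volume_Icc, hvolA, ← ENNReal.ofReal_sub _ (by norm_num)]
    norm_num
  have haT : (volume A).toReal = 1/2 := by
    rw [hvolA, ENNReal.toReal_ofReal (by norm_num)]
  have hbT : (volume B).toReal = 1/2 := by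
    rw [hvolB, ENNReal.toReal_ofReal (by norm_num)]
  have hm : Measurable (half2 A) :=
    Measurable.piecewise hAm (cum_mono hAsub).measurable
      (measurable_const.add (cum_mono hBsub).measurable)
  refine ⟨hm, ?_⟩
  haveI hP : IsProbabilityMeasure μ₀ :=
    ⟨by rw [Measure.restrict_apply_univ, Real.volume_Icc]; norm_num⟩
  haveI : IsProbabilityMeasure (μ₀.map (half2 A)) :=
    Measure.isProbabilityMeasure_map hm.aemeasurable
  refine Measure.ext_of_Iic _ _ fun s => ?_
  rw [Measure.map_apply hm measurableSet_Iic, Measure.restrict_apply (hm measurableSet_Iic),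
    Measure.restrict_apply measurableSet_Iic]
  have hset : half2 A ⁻¹' Iic s ∩ Icc 0 1
      = (A ∩ {t | cum A t ≤ s}) ∪ (B ∩ {t | cum B t ≤ s - 1/2}) := by
    ext x
    simp only [mem_inter_iff, mem_preimage, mem_Iic, mem_union, mem_setOf_eq, hB_def, mem_diff]
    constructor
    · rintro ⟨hx, hxI⟩
      by_cases hA : x ∈ A
      · left
        refine ⟨hA, ?_⟩
        simpa only [half2, if_pos hA] using hx
      · right
        refine ⟨⟨hxI, hA⟩, ?_⟩
        simp only [half2, if_neg hA] at hx
        linarith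
    · rintro (⟨hA, hx⟩ | ⟨hxB, hx⟩)
      · exact ⟨by simp only [half2, if_pos hA]; exact hx, hAsub hA⟩
      · have hA : x ∉ A := hxB.2
        exact ⟨by simp only [half2, if_neg hA]; linarith, hxB.1⟩
  have hdisj : Disjoint (A ∩ {t | cum A t ≤ s}) (B ∩ {t | cum B t ≤ s - 1/2}) := by
    rw [Set.disjoint_left]
    rintro x ⟨hxA, -⟩ ⟨hxB, -⟩
    exact hxB.2 hxA
  rw [hset, measure_union hdisj
      (hBm.inter ((cum_mono hBsub).measurable measurableSet_Iic)),
    cum_level hAm hAsub, cum_level hBm hBsub, haT, hbT]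
  have hIic : Iic s ∩ Icc 0 1 = Icc 0 (min s 1) := by
    ext t
    simp only [mem_inter_iff, mem_Iic, mem_Icc, le_min_iff]
    tauto
  rw [hIic, Real.volume_Icc, sub_zero]
  rcases le_total s 0 with h | h
  · rw [max_eq_right h, max_eq_right (by linarith : s - 1/2 ≤ 0),
      min_eq_left (by norm_num : (0:ℝ) ≤ 1/2), min_eq_left (by linarith : s ≤ 1),
      ENNReal.ofReal_zero, ENNReal.ofReal_of_nonpos h, add_zero]
  · rcases le_total s (1/2) with h2 | h2
    · rw [max_eq_left h, min_eq_left h2, max_eq_right (by linarith : s - 1/2 ≤ 0),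
        min_eq_left (by norm_num : (0:ℝ) ≤ 1/2), min_eq_left (by linarith : s ≤ 1),
        ENNReal.ofReal_zero, add_zero]
    · rcases le_total s 1 with h3 | h3
      · rw [max_eq_left (by linarith : (0:ℝ) ≤ s), min_eq_right h2,
          max_eq_left (by linarith : 0 ≤ s - 1/2),
          min_eq_left (by linarith : s - 1/2 ≤ 1/2), min_eq_left h3,
          ← ENNReal.ofReal_add (by norm_num) (by linarith)]
        norm_num
      · rw [max_eq_left (by linarith : (0:ℝ) ≤ s), min_eq_right (by linarith : 1/2 ≤ s),
          max_eq_left (by linarith : 0 ≤ s - 1/2),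
          min_eq_right (by linarith : 1/2 ≤ s - 1/2), min_eq_right h3,
          ← ENNReal.ofReal_add (by norm_num) (by norm_num)]
        norm_num

lemma half2_lt (hAm : MeasurableSet A) (hAsub : A ⊆ Icc 0 1)
    (hvolA : volume A = ENNReal.ofReal (1/2)) :
    ∀ᵐ x ∂μ₀, (x ∈ A → half2 A x < 1/2) := by
  have hnull := cum_top_null hAm hAsub
  have haT : (volume A).toReal = 1/2 := by
    rw [hvolA, ENNReal.toReal_ofReal (by norm_num)]
  rw [haT] at hnull
  rw [ae_iff]
  refine measure_mono_null (t := A ∩ {t | 1/2 ≤ cum A t}) (fun x hx => ?_) ?_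
  · simp only [mem_setOf_eq, _root_.not_imp, not_lt] at hx
    refine ⟨hx.1, ?_⟩
    show (1:ℝ)/2 ≤ cum A x
    have := hx.2
    simpa only [half2, if_pos hx.1] using this
  · rw [Measure.restrict_apply' measurableSet_Icc]
    exact measure_mono_null inter_subset_left hnull

lemma half2_gt (hAm : MeasurableSet A) (hAsub : A ⊆ Icc 0 1) :
    ∀ᵐ x ∂μ₀, (x ∈ Icc 0 1 \ A → 1/2 < half2 A x) := by
  set B := Icc 0 1 \ A with hB_def
  have hBm : MeasurableSet B := measurableSet_Icc.diff hAm
  have hBsub : B ⊆ Icc 0 1 := diff_subset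
  have hnull : volume (B ∩ {t | cum B t ≤ 0}) = 0 := by
    rw [cum_level hBm hBsub, max_self, min_eq_left ENNReal.toReal_nonneg]
    simp
  rw [ae_iff]
  refine measure_mono_null (t := B ∩ {t | cum B t ≤ 0}) (fun x hx => ?_) ?_
  · simp only [mem_setOf_eq, _root_.not_imp, not_lt] at hx
    refine ⟨hx.1, ?_⟩
    show cum B x ≤ 0
    have h2 := hx.2
    have hA : x ∉ A := hx.1.2
    simp only [half2, if_neg hA, ← hB_def] at h2
    linarith
  · rw [Measure.restrict_apply' measurableSet_Icc]
    exact measure_mono_null inter_subset_left hnull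


end Aux

/-- a `{0,1}`-valued triangle-free graphon of edge density `1/2`
    is equivalent to the complete balanced bipartite graphon. -/
theorem bipartite_rigidity (g : ℝ → ℝ → ℝ) (hg : IsGraphon g)
    (h01 : ∀ᵐ q ∂(unitMeasure.prod unitMeasure), g q.1 q.2 = 0 ∨ g q.1 q.2 = 1)
    (hgt : triangleDensity g = 0) (hge : edgeDensity g = 1 / 2) :
    GraphonEquiv g bipOne := by
  have h01' : ∀ᵐ q ∂(μ₀.prod μ₀), g q.1 q.2 = 0 ∨ g q.1 q.2 = 1 := h01
  obtain ⟨A, hAm, hAsub, hvolA, hae⟩ := structure_lemma g hg h01' hgt hge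
  refine ⟨id, half2 A, MeasurePreserving.id _, half2_mp hAm hAsub hvolA, ?_⟩
  show ∀ᵐ q ∂(μ₀.prod μ₀), g (id q.1) (id q.2) = bipOne (half2 A q.1) (half2 A q.2)
  have hlt := half2_lt hAm hAsub hvolA
  have hgt2 := half2_gt hAm hAsub
  filter_upwards [hae, ae_fst hlt, ae_snd hlt, ae_fst hgt2, ae_snd hgt2,
    ae_fst (μ := μ₀) (ae_restrict_mem measurableSet_Icc),
    ae_snd (μ := μ₀) (ae_restrict_mem measurableSet_Icc)] with q hq h1l h2l h1g h2g h1I h2I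
  simp only [id_eq]
  rw [hq]
  unfold bipOne
  by_cases h1A : q.1 ∈ A <;> by_cases h2A : q.2 ∈ A
  · rw [Set.indicator_of_notMem (show q ∉ (A ×ˢ Aᶜ) ∪ (Aᶜ ×ˢ A) by
        rintro (⟨-, hb⟩ | ⟨ha, -⟩)
        · exact hb h2A
        · exact ha h1A),
      if_neg (by
        rintro (⟨-, hb⟩ | ⟨-, hb⟩)
        · exact absurd hb (not_lt.2 (h2l h2A).le)
        · exact absurd hb (not_lt.2 (h1l h1A).le))]
  · rw [Set.indicator_of_mem (show q ∈ (A ×ˢ Aᶜ) ∪ (Aᶜ ×ˢ A) from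
        Or.inl (Set.mem_prod.2 ⟨h1A, h2A⟩)),
      if_pos (Or.inl ⟨h1l h1A, h2g ⟨h2I, h2A⟩⟩)]
    rfl
  · rw [Set.indicator_of_mem (show q ∈ (A ×ˢ Aᶜ) ∪ (Aᶜ ×ˢ A) from
        Or.inr (Set.mem_prod.2 ⟨h1A, h2A⟩)),
      if_pos (Or.inr ⟨h2l h2A, h1g ⟨h1I, h1A⟩⟩)]
    rfl
  · rw [Set.indicator_of_notMem (show q ∉ (A ×ˢ Aᶜ) ∪ (Aᶜ ×ˢ A) by
        rintro (⟨ha, -⟩ | ⟨-, hb⟩)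
        · exact h1A ha
        · exact h2A hb),
      if_neg (by
        rintro (⟨ha, -⟩ | ⟨hb, -⟩)
        · exact absurd ha (not_lt.2 (h1g ⟨h1I, h1A⟩).le)
        · exact absurd hb (not_lt.2 (h2g ⟨h2I, h2A⟩).le))]
end
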